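/- arXiv:2006.01955 — 8 statements merged into one kernel-verified Lean document; each statement's English description precedes it below -/
import Mathlib

section
/- Let α > 1 and set β = (α+1)/2. Then the following are equivalent: (i) for all real numbers r > s > 0 one has ∫_{-π}^{π} (r² + s² − 2 r s cos θ)^{−β} · (2 − (r/s + s/r) cos θ) dθ ≥ 0; (ii) α ≤ 3. (This integral is, up to the positive factor s^{2β}, the quantity F[ln|x|, |x|^{1−α}/(1−α)](r,s) measuring the change of the logarithmic moment under the mutual attraction of two concentric circles of radii r and s interacting through the power-law potential with force W'(ρ) = ρ^{−α}.) -/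
open Real MeasureTheory Set

lemma key_ident (r s β : ℝ) (hs : 0 < s) (hsr : s < r) :
    (∫ θ in (-Real.pi)..Real.pi,
        (r ^ 2 + s ^ 2 - 2 * r * s * Real.cos θ) ^ (-β) *
          (2 - (r / s + s / r) * Real.cos θ)) =
    2 * (2 - β) * ∫ θ in (-Real.pi)..Real.pi,
        Real.sin θ ^ 2 * (r ^ 2 + s ^ 2 - 2 * r * s * Real.cos θ) ^ (-β) := by
  have hr : 0 < r := hs.trans hsr
  set u : ℝ → ℝ := fun θ => r ^ 2 + s ^ 2 - 2 * r * s * Real.cos θ with hu_def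
  have hu : ∀ θ, 0 < u θ := by
    intro θ
    have h1 := Real.cos_le_one θ
    have h2 : 0 < r * s := mul_pos hr hs
    simp only [hu_def]
    nlinarith [sq_nonneg (r - s)]
  have hu_cont : Continuous u := by
    simp only [hu_def]; continuity
  have hU : ∀ θ, HasDerivAt u (2 * r * s * Real.sin θ) θ := by
    intro θ
    have h := ((Real.hasDerivAt_cos θ).const_mul (2 * r * s)).const_sub (r ^ 2 + s ^ 2)
    exact h.congr_deriv (by ring)
  set D : ℝ → ℝ := fun θ => Real.cos θ * u θ ^ (1 - β) +
      Real.sin θ * (2 * r * s * Real.sin θ * (1 - β) * u θ ^ (1 - β - 1)) with hD_def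
  have hF : ∀ θ, HasDerivAt (fun t => Real.sin t * u t ^ (1 - β)) (D θ) θ := by
    intro θ
    exact (Real.hasDerivAt_sin θ).mul ((hU θ).rpow_const (Or.inl (hu θ).ne'))
  have hcont_pow : ∀ c : ℝ, Continuous (fun θ => u θ ^ c) := by
    intro c
    exact hu_cont.rpow_const (fun x => Or.inl (hu x).ne')
  have hD_cont : Continuous D := by
    simp only [hD_def]
    exact (Real.continuous_cos.mul (hcont_pow _)).add
      (Real.continuous_sin.mul
        ((((continuous_const.mul Real.continuous_sin).mul continuous_const).mul (hcont_pow _))))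
  have hFTC : (∫ θ in (-Real.pi)..Real.pi, D θ) = 0 := by
    rw [intervalIntegral.integral_eq_sub_of_hasDerivAt (fun θ _ => hF θ)
      (hD_cont.intervalIntegrable _ _)]
    simp
  have hpt : ∀ θ, u θ ^ (-β) * (2 - (r / s + s / r) * Real.cos θ) =
      2 * (2 - β) * (Real.sin θ ^ 2 * u θ ^ (-β)) - (1 / (r * s)) * D θ := by
    intro θ
    have h1 : u θ ^ (1 - β) = u θ * u θ ^ (-β) := by
      rw [show (1 : ℝ) - β = 1 + (-β) by ring, Real.rpow_add (hu θ), Real.rpow_one]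
    have h2 : u θ ^ (1 - β - 1) = u θ ^ (-β) := by norm_num
    have hsin := Real.sin_sq_add_cos_sq θ
    simp only [hD_def, h1, h2]
    have huθ : u θ = r ^ 2 + s ^ 2 - 2 * r * s * Real.cos θ := rfl
    rw [huθ]
    set w : ℝ := (r ^ 2 + s ^ 2 - 2 * r * s * Real.cos θ) ^ (-β) with hw
    field_simp
    linear_combination (-2 * w * r * s) * hsin
  have hint1 : IntervalIntegrable
      (fun θ => 2 * (2 - β) * (Real.sin θ ^ 2 * u θ ^ (-β))) volume (-Real.pi) Real.pi :=
    (continuous_const.mul ((Real.continuous_sin.pow 2).mul (hcont_pow _))).intervalIntegrable _ _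
  have hint2 : IntervalIntegrable (fun θ => (1 / (r * s)) * D θ) volume (-Real.pi) Real.pi :=
    (continuous_const.mul hD_cont).intervalIntegrable _ _
  calc (∫ θ in (-Real.pi)..Real.pi, u θ ^ (-β) * (2 - (r / s + s / r) * Real.cos θ))
      = ∫ θ in (-Real.pi)..Real.pi,
          (2 * (2 - β) * (Real.sin θ ^ 2 * u θ ^ (-β)) - (1 / (r * s)) * D θ) := by
        apply intervalIntegral.integral_congr
        intro θ _
        exact hpt θ
    _ = (∫ θ in (-Real.pi)..Real.pi, 2 * (2 - β) * (Real.sin θ ^ 2 * u θ ^ (-β)))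
        - ∫ θ in (-Real.pi)..Real.pi, (1 / (r * s)) * D θ :=
        intervalIntegral.integral_sub hint1 hint2
    _ = 2 * (2 - β) * (∫ θ in (-Real.pi)..Real.pi, Real.sin θ ^ 2 * u θ ^ (-β))
        - (1 / (r * s)) * ∫ θ in (-Real.pi)..Real.pi, D θ := by
        rw [intervalIntegral.integral_const_mul, intervalIntegral.integral_const_mul]
    _ = 2 * (2 - β) * ∫ θ in (-Real.pi)..Real.pi, Real.sin θ ^ 2 * u θ ^ (-β) := by
        rw [hFTC]; ring

/-- Positivity of the logarithmic-moment interaction of two circles under a power-law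
attraction force `W'(ρ) = ρ^{-α}` holds for all radii `r > s > 0` if and only if `α ≤ 3`. -/
theorem stmt_0 (α : ℝ) (hα : 1 < α) (β : ℝ) (hβ : β = (α + 1) / 2) :
    (∀ r s : ℝ, 0 < s → s < r →
        0 ≤ ∫ θ in (-Real.pi)..Real.pi,
          (r ^ 2 + s ^ 2 - 2 * r * s * Real.cos θ) ^ (-β) *
            (2 - (r / s + s / r) * Real.cos θ)) ↔ α ≤ 3 := by
  constructor
  · intro h
    by_contra h3
    push_neg at h3
    have hβ2 : 2 < β := by rw [hβ]; linarith
    have hI := h 2 1 one_pos one_lt_two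
    rw [key_ident 2 1 β one_pos one_lt_two] at hI
    set f : ℝ → ℝ := fun θ =>
      Real.sin θ ^ 2 * ((2:ℝ) ^ 2 + 1 ^ 2 - 2 * 2 * 1 * Real.cos θ) ^ (-β) with hf_def
    have hbase : ∀ θ, 0 < (2:ℝ) ^ 2 + 1 ^ 2 - 2 * 2 * 1 * Real.cos θ := by
      intro θ
      nlinarith [Real.cos_le_one θ]
    have hf_cont : Continuous f := by
      apply (Real.continuous_sin.pow 2).mul
      exact (by continuity : Continuous fun θ => (2:ℝ) ^ 2 + 1 ^ 2 - 2 * 2 * 1 * Real.cos θ).rpow_const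
        (fun x => Or.inl (hbase x).ne')
    have hf_nonneg : ∀ θ, 0 ≤ f θ := fun θ =>
      mul_nonneg (sq_nonneg _) (Real.rpow_nonneg (hbase θ).le _)
    have hsplit : (∫ θ in (-Real.pi)..Real.pi, f θ)
        = (∫ θ in (-Real.pi)..(0:ℝ), f θ) + ∫ θ in (0:ℝ)..Real.pi, f θ :=
      (intervalIntegral.integral_add_adjacent_intervals
        (hf_cont.intervalIntegrable _ _) (hf_cont.intervalIntegrable _ _)).symm
    have hpos : 0 < ∫ θ in (0:ℝ)..Real.pi, f θ := by
      apply intervalIntegral.intervalIntegral_pos_of_pos_on (hf_cont.intervalIntegrable _ _)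
      · intro x hx
        have hsx : 0 < Real.sin x := Real.sin_pos_of_pos_of_lt_pi hx.1 hx.2
        exact mul_pos (pow_pos hsx 2) (Real.rpow_pos_of_pos (hbase x) _)
      · exact Real.pi_pos
    have hnn : 0 ≤ ∫ θ in (-Real.pi)..(0:ℝ), f θ :=
      intervalIntegral.integral_nonneg (by linarith [Real.pi_pos]) (fun x _ => hf_nonneg x)
    have hS : 0 < ∫ θ in (-Real.pi)..Real.pi, f θ := by
      rw [hsplit]; linarith
    nlinarith
  · intro h3 r s hs hsr
    rw [key_ident r s β hs hsr]
    have hβ2 : β ≤ 2 := by rw [hβ]; linarith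
    have hbase : ∀ θ, (0:ℝ) ≤ r ^ 2 + s ^ 2 - 2 * r * s * Real.cos θ := by
      intro θ
      nlinarith [Real.cos_le_one θ, mul_pos (hs.trans hsr) hs, sq_nonneg (r - s)]
    have hS : 0 ≤ ∫ θ in (-Real.pi)..Real.pi,
        Real.sin θ ^ 2 * (r ^ 2 + s ^ 2 - 2 * r * s * Real.cos θ) ^ (-β) :=
      intervalIntegral.integral_nonneg (by linarith [Real.pi_pos])
        (fun x _ => mul_nonneg (sq_nonneg _) (Real.rpow_nonneg (hbase x) _))
    nlinarith
end

section
/- Let β > 1 and z > 1. Then ∫_{-π}^{π} (z − cos θ)^{−β} (1 − z cos θ) dθ = (2 − β) ∫_{-π}^{π} (z − cos θ)^{−β} sin² θ dθ. In particular, for 1 < β ≤ 2 the left-hand side is nonnegative for every z > 1, and for β > 2 it is negative for every z > 1. -/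
open Real intervalIntegral

/-- Integration-by-parts identity `∫ (z-cosθ)^{-β}(1-z cosθ) dθ = (2-β) ∫ (z-cosθ)^{-β} sin²θ dθ`
for `β > 1`, `z > 1`, and the resulting sign of the left-hand side. -/
theorem stmt_1 (β z : ℝ) (hβ : 1 < β) (hz : 1 < z) :
    ((∫ θ in (-Real.pi)..Real.pi, (z - Real.cos θ) ^ (-β) * (1 - z * Real.cos θ))
        = (2 - β) * ∫ θ in (-Real.pi)..Real.pi, (z - Real.cos θ) ^ (-β) * Real.sin θ ^ 2)
    ∧ (β ≤ 2 →
        0 ≤ ∫ θ in (-Real.pi)..Real.pi, (z - Real.cos θ) ^ (-β) * (1 - z * Real.cos θ))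
    ∧ (2 < β →
        (∫ θ in (-Real.pi)..Real.pi, (z - Real.cos θ) ^ (-β) * (1 - z * Real.cos θ)) < 0) := by
  have hpos : ∀ θ : ℝ, 0 < z - Real.cos θ := fun θ => by
    have := Real.cos_le_one θ; linarith
  have hcont : Continuous fun θ : ℝ => (z - Real.cos θ) ^ (-β) := by
    apply Continuous.rpow_const (by continuity)
    intro θ; exact Or.inl (ne_of_gt (hpos θ))
  have hint1 : IntervalIntegrable
      (fun θ => (z - Real.cos θ) ^ (-β) * (1 - z * Real.cos θ)) MeasureTheory.volume
      (-Real.pi) Real.pi :=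
    (hcont.mul (by continuity)).intervalIntegrable _ _
  have hcont2 : Continuous fun θ : ℝ => (z - Real.cos θ) ^ (-β) * Real.sin θ ^ 2 :=
    hcont.mul (by continuity)
  have hint2 : IntervalIntegrable
      (fun θ => (2 - β) * ((z - Real.cos θ) ^ (-β) * Real.sin θ ^ 2)) MeasureTheory.volume
      (-Real.pi) Real.pi :=
    ((continuous_const.mul hcont2)).intervalIntegrable _ _
  -- the antiderivative
  set F : ℝ → ℝ := fun θ => -((z - Real.cos θ) ^ (1 - β) * Real.sin θ) with hF
  have hderiv : ∀ θ : ℝ, HasDerivAt F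
      ((z - Real.cos θ) ^ (-β) * (1 - z * Real.cos θ)
        - (2 - β) * ((z - Real.cos θ) ^ (-β) * Real.sin θ ^ 2)) θ := by
    intro θ
    have h1 : HasDerivAt (fun x : ℝ => z - Real.cos x) (Real.sin θ) θ := by
      simpa using ((Real.hasDerivAt_cos θ).const_sub z)
    have h2 : HasDerivAt (fun x : ℝ => (z - Real.cos x) ^ (1 - β))
        ((1 - β) * (z - Real.cos θ) ^ (1 - β - 1) * Real.sin θ) θ := by
      have h := h1.rpow_const (p := 1 - β) (Or.inl (ne_of_gt (hpos θ)))
      convert h using 1; ring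
    have h3 := (h2.mul (Real.hasDerivAt_sin θ)).neg
    have e1 : (1 - β - 1 : ℝ) = -β := by ring
    have e2 : (z - Real.cos θ) ^ (1 - β)
        = (z - Real.cos θ) ^ (-β) * (z - Real.cos θ) := by
      rw [show (1 - β : ℝ) = -β + 1 by ring, Real.rpow_add (hpos θ), Real.rpow_one]
    rw [e1] at h3
    convert h3 using 1
    case e'_4 => rfl
    case e'_5 => rfl
    case e'_8 => rfl
    rw [e2]
    have hsc := Real.sin_sq_add_cos_sq θ
    linear_combination (-(z - Real.cos θ) ^ (-β)) * hsc
  have hdc : Continuous fun θ => (z - Real.cos θ) ^ (-β) * (1 - z * Real.cos θ)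
        - (2 - β) * ((z - Real.cos θ) ^ (-β) * Real.sin θ ^ 2) := by
    exact (hcont.mul (by continuity)).sub (continuous_const.mul hcont2)
  have hkey : (∫ θ in (-Real.pi)..Real.pi,
      ((z - Real.cos θ) ^ (-β) * (1 - z * Real.cos θ)
        - (2 - β) * ((z - Real.cos θ) ^ (-β) * Real.sin θ ^ 2))) = 0 := by
    rw [intervalIntegral.integral_eq_sub_of_hasDerivAt (fun θ _ => hderiv θ)
      (hdc.intervalIntegrable _ _)]
    simp [hF, Real.sin_pi]
  rw [intervalIntegral.integral_sub hint1 hint2] at hkey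
  rw [intervalIntegral.integral_const_mul] at hkey
  have hEq : (∫ θ in (-Real.pi)..Real.pi, (z - Real.cos θ) ^ (-β) * (1 - z * Real.cos θ))
      = (2 - β) * ∫ θ in (-Real.pi)..Real.pi, (z - Real.cos θ) ^ (-β) * Real.sin θ ^ 2 :=
    sub_eq_zero.mp hkey
  have hI_nonneg : 0 ≤ ∫ θ in (-Real.pi)..Real.pi, (z - Real.cos θ) ^ (-β) * Real.sin θ ^ 2 := by
    apply intervalIntegral.integral_nonneg (by linarith [Real.pi_pos])
    intro θ _
    exact mul_nonneg (Real.rpow_nonneg (le_of_lt (hpos θ)) _) (sq_nonneg _)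
  refine ⟨hEq, fun hβ2 => ?_, fun hβ2 => ?_⟩
  · rw [hEq]; exact mul_nonneg (by linarith) hI_nonneg
  · rw [hEq]
    have hI_pos : 0 < ∫ θ in (-Real.pi)..Real.pi,
        (z - Real.cos θ) ^ (-β) * Real.sin θ ^ 2 := by
      have hsplit : (∫ θ in (-Real.pi)..(0:ℝ), (z - Real.cos θ) ^ (-β) * Real.sin θ ^ 2)
          + (∫ θ in (0:ℝ)..Real.pi, (z - Real.cos θ) ^ (-β) * Real.sin θ ^ 2)
          = ∫ θ in (-Real.pi)..Real.pi, (z - Real.cos θ) ^ (-β) * Real.sin θ ^ 2 :=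
        intervalIntegral.integral_add_adjacent_intervals
          (hcont2.intervalIntegrable _ _) (hcont2.intervalIntegrable _ _)
      have h1 : 0 ≤ ∫ θ in (-Real.pi)..(0:ℝ), (z - Real.cos θ) ^ (-β) * Real.sin θ ^ 2 := by
        apply intervalIntegral.integral_nonneg (by linarith [Real.pi_pos])
        intro θ _
        exact mul_nonneg (Real.rpow_nonneg (le_of_lt (hpos θ)) _) (sq_nonneg _)
      have h2 : 0 < ∫ θ in (0:ℝ)..Real.pi, (z - Real.cos θ) ^ (-β) * Real.sin θ ^ 2 := by
        apply intervalIntegral.intervalIntegral_pos_of_pos_on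
          (hcont2.intervalIntegrable _ _) _ Real.pi_pos
        intro θ hθ
        have hs : 0 < Real.sin θ := Real.sin_pos_of_pos_of_lt_pi hθ.1 hθ.2
        exact mul_pos (Real.rpow_pos_of_pos (hpos θ) _) (by positivity)
      linarith
    exact mul_neg_of_neg_of_pos (by linarith) hI_pos
end

section
/- Fix 1 < β < 2. Then there exists a constant C > 0, depending only on β, such that for every z > 1: ((z − 1)/z) ∫_{-π}^{π} (z − cos θ)^{−β} dθ ≤ C ∫_{-π}^{π} (z − cos θ)^{−β} (1 − z cos θ) dθ. -/
open Real MeasureTheory intervalIntegral Set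

namespace Stmt4Aux

variable {β z : ℝ}

lemma base_pos (hz : 1 < z) (θ : ℝ) : 0 < z - Real.cos θ := by
  have := Real.cos_le_one θ; linarith

lemma cont_f (hz : 1 < z) : Continuous fun θ : ℝ => (z - Real.cos θ) ^ (-β) := by
  apply Continuous.rpow_const (by continuity)
  intro θ; exact Or.inl (base_pos hz θ).ne'

lemma intg_f (hz : 1 < z) (a b : ℝ) :
    IntervalIntegrable (fun θ : ℝ => (z - Real.cos θ) ^ (-β)) volume a b :=
  (cont_f hz).intervalIntegrable a b

lemma f_nonneg (hz : 1 < z) (θ : ℝ) : 0 ≤ (z - Real.cos θ) ^ (-β) :=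
  Real.rpow_nonneg (base_pos hz θ).le _

/-- Integration by parts identity. -/
lemma ibp (hβ1 : 1 < β) (hz : 1 < z) :
    (∫ θ in (-Real.pi)..Real.pi, (z - Real.cos θ) ^ (-β) * (1 - z * Real.cos θ))
      = (2 - β) * ∫ θ in (-Real.pi)..Real.pi, (z - Real.cos θ) ^ (-β) * Real.sin θ ^ 2 := by
  have hderiv : ∀ θ : ℝ, HasDerivAt (fun θ : ℝ => (z - Real.cos θ) ^ (1 - β))
      ((1 - β) * (z - Real.cos θ) ^ (-β) * Real.sin θ) θ := by
    intro θ
    have h1 : HasDerivAt (fun θ : ℝ => z - Real.cos θ) (Real.sin θ) θ := by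
      simpa using (Real.hasDerivAt_cos θ).const_sub z
    have h2 := h1.rpow_const (p := 1 - β) (Or.inl (base_pos hz θ).ne')
    have e : (1 - β - 1) = -β := by ring
    rw [e] at h2
    convert h2 using 1
    ring
  have hparts := intervalIntegral.integral_mul_deriv_eq_deriv_mul
      (u := fun θ : ℝ => (z - Real.cos θ) ^ (1 - β)) (v := Real.sin)
      (u' := fun θ : ℝ => (1 - β) * (z - Real.cos θ) ^ (-β) * Real.sin θ)
      (v' := Real.cos)
      (a := -Real.pi) (b := Real.pi)
      (fun x _ => hderiv x) (fun x _ => Real.hasDerivAt_sin x)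
      (by apply Continuous.intervalIntegrable; exact (continuous_const.mul (cont_f hz)).mul Real.continuous_sin)
      (Real.continuous_cos.intervalIntegrable _ _)
  simp only [Real.sin_pi, Real.sin_neg, mul_zero, neg_zero, sub_zero, zero_sub] at hparts
  -- hparts : ∫ (z-cosθ)^(1-β) * cos θ = - ∫ (1-β)*(z-cosθ)^(-β)*sinθ * sin θ
  have key : ∀ θ : ℝ, (z - Real.cos θ) ^ (-β) * (1 - z * Real.cos θ)
      = (z - Real.cos θ) ^ (-β) * Real.sin θ ^ 2 - (z - Real.cos θ) ^ (1 - β) * Real.cos θ := by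
    intro θ
    have hb := base_pos hz θ
    have : (z - Real.cos θ) ^ (1 - β) = (z - Real.cos θ) ^ (-β) * (z - Real.cos θ) := by
      rw [show (1 - β) = -β + 1 by ring, Real.rpow_add hb, Real.rpow_one]
    rw [this]
    have hs := Real.sin_sq_add_cos_sq θ
    linear_combination (-((z - Real.cos θ) ^ (-β))) * hs
  rw [intervalIntegral.integral_congr (g := fun θ => (z - Real.cos θ) ^ (-β) * Real.sin θ ^ 2
        - (z - Real.cos θ) ^ (1 - β) * Real.cos θ) (fun θ _ => key θ)]
  rw [intervalIntegral.integral_sub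
      (by apply Continuous.intervalIntegrable; exact (cont_f hz).mul (Real.continuous_sin.pow 2))
      (by apply Continuous.intervalIntegrable
          exact (Continuous.rpow_const (by continuity) (fun θ => Or.inl (base_pos hz θ).ne')).mul Real.continuous_cos)]
  rw [hparts]
  have : ∀ θ:ℝ, (1 - β) * (z - Real.cos θ) ^ (-β) * Real.sin θ * Real.sin θ
      = (1-β) * ((z - Real.cos θ) ^ (-β) * Real.sin θ ^ 2) := by intro θ; ring
  rw [intervalIntegral.integral_congr (fun θ _ => this θ), intervalIntegral.integral_const_mul]
  ring


lemma three_rpow (hβ2 : β < 2) : (1:ℝ)/9 ≤ (3:ℝ) ^ (-β) := by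
  have h1 : (3:ℝ) ^ (-2:ℝ) ≤ (3:ℝ) ^ (-β) :=
    Real.rpow_le_rpow_of_exponent_le (by norm_num) (by linarith)
  have h2 : (3:ℝ) ^ (-2:ℝ) = 1/9 := by
    rw [show ((-2:ℝ)) = ((-2:ℤ):ℝ) by norm_num, Real.rpow_intCast]; norm_num
  rw [h2] at h1; exact h1

lemma S_lower (hβ1 : 1 < β) (hβ2 : β < 2) (hz : 1 < z) :
    (min (Real.sqrt (z-1)) (1/2))^3 * (z-1)^(-β) / 27
      ≤ ∫ θ in (-Real.pi)..Real.pi, (z - Real.cos θ) ^ (-β) * Real.sin θ ^ 2 := by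
  set θ0 := min (Real.sqrt (z-1)) (1/2) with hθ0
  have hε : 0 < z - 1 := by linarith
  have hθ0pos : 0 < θ0 := lt_min (Real.sqrt_pos.2 hε) (by norm_num)
  have hθ0le : θ0 ≤ 1/2 := min_le_right _ _
  have hθ0sq : θ0^2 ≤ z - 1 := by
    have h1 : θ0 ≤ Real.sqrt (z-1) := min_le_left _ _
    have := pow_le_pow_left₀ hθ0pos.le h1 2
    rwa [Real.sq_sqrt hε.le] at this
  have hπ3 : (3:ℝ) < Real.pi := Real.pi_gt_three
  have hπ2 : Real.pi^2 ≤ 10 := by nlinarith [Real.pi_lt_d2]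
  have hnn : ∀ θ:ℝ, 0 ≤ (z - Real.cos θ) ^ (-β) * Real.sin θ ^ 2 :=
    fun θ => mul_nonneg (f_nonneg hz θ) (sq_nonneg _)
  have hintg : ∀ a b : ℝ, IntervalIntegrable
      (fun θ : ℝ => (z - Real.cos θ) ^ (-β) * Real.sin θ ^ 2) volume a b := by
    intro a b
    exact ((cont_f hz).mul (Real.continuous_sin.pow 2)).intervalIntegrable a b
  have hsub : (∫ θ in θ0..(2*θ0), (z - Real.cos θ) ^ (-β) * Real.sin θ ^ 2)
      ≤ ∫ θ in (-Real.pi)..Real.pi, (z - Real.cos θ) ^ (-β) * Real.sin θ ^ 2 := by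
    apply intervalIntegral.integral_mono_interval (by linarith) (by linarith) (by linarith)
      (Filter.Eventually.of_forall (fun θ => hnn θ)) (hintg _ _)
  have hlow : ∀ θ ∈ Icc θ0 (2*θ0),
      (z-1)^(-β)/9 * (θ0^2/3) ≤ (z - Real.cos θ) ^ (-β) * Real.sin θ ^ 2 := by
    intro θ hθ
    obtain ⟨hθ1, hθ2⟩ := hθ
    have hθpos : 0 < θ := lt_of_lt_of_le hθ0pos hθ1
    have hθle1 : θ ≤ 1 := by linarith
    have hbase : z - Real.cos θ ≤ 3*(z-1) := by
      have h1 : 1 - θ^2/2 ≤ Real.cos θ := Real.one_sub_sq_div_two_le_cos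
      nlinarith [hθ0sq]
    have hf : (3*(z-1))^(-β) ≤ (z - Real.cos θ)^(-β) :=
      Real.rpow_le_rpow_of_nonpos (base_pos hz θ) hbase (by linarith)
    have hf2 : (z-1)^(-β)/9 ≤ (z - Real.cos θ)^(-β) := by
      have := three_rpow hβ2
      have hm : (3*(z-1))^(-β) = 3^(-β) * (z-1)^(-β) :=
        Real.mul_rpow (by norm_num) hε.le
      have hεp : 0 < (z-1)^(-β) := Real.rpow_pos_of_pos hε _
      nlinarith
    have hsin : θ0^2/3 ≤ Real.sin θ ^ 2 := by
      have h1 : 2/Real.pi * θ ≤ Real.sin θ :=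
        Real.mul_le_sin hθpos.le (by nlinarith)
      have h2 : 0 ≤ 2/Real.pi * θ := by positivity
      have h3 : (2/Real.pi * θ)^2 ≤ Real.sin θ ^2 := by nlinarith
      have h4 : θ0^2/3 ≤ (2/Real.pi * θ)^2 := by
        have hπpos : (0:ℝ) < Real.pi := by linarith
        have he : (2/Real.pi * θ)^2 = 4*θ^2/Real.pi^2 := by field_simp; ring
        rw [he, div_le_div_iff₀ (by norm_num) (by positivity)]
        have hθsq : θ0^2 ≤ θ^2 := by nlinarith
        nlinarith
      linarith
    have hfpos : 0 ≤ (z - Real.cos θ)^(-β) := f_nonneg hz θ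
    exact mul_le_mul hf2 hsin (by positivity) hfpos
  have hconst : (∫ _ in θ0..(2*θ0), (z-1)^(-β)/9 * (θ0^2/3))
      ≤ ∫ θ in θ0..(2*θ0), (z - Real.cos θ) ^ (-β) * Real.sin θ ^ 2 :=
    intervalIntegral.integral_mono_on (by linarith)
      (intervalIntegrable_const) (hintg _ _) hlow
  rw [intervalIntegral.integral_const] at hconst
  have : θ0^3 * (z-1)^(-β)/27 = (2*θ0 - θ0) • ((z-1)^(-β)/9 * (θ0^2/3)) := by
    simp only [smul_eq_mul]; ring
  rw [this]
  linarith


lemma I_upper_const (hβ1 : 1 < β) (hz : 1 < z) :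
    (∫ θ in (-Real.pi)..Real.pi, (z - Real.cos θ) ^ (-β)) ≤ 2*Real.pi * (z-1)^(-β) := by
  have h : ∀ θ ∈ Icc (-Real.pi) Real.pi, (z - Real.cos θ)^(-β) ≤ (z-1)^(-β) := by
    intro θ _
    exact Real.rpow_le_rpow_of_nonpos (by linarith)
      (by have := Real.cos_le_one θ; linarith) (by linarith)
  have := intervalIntegral.integral_mono_on (by linarith [Real.pi_pos])
    (intg_f hz _ _) (intervalIntegrable_const) h
  rw [intervalIntegral.integral_const, smul_eq_mul] at this
  calc (∫ θ in (-Real.pi)..Real.pi, (z - Real.cos θ) ^ (-β))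
      ≤ (Real.pi - -Real.pi) * (z-1)^(-β) := this
    _ = 2*Real.pi * (z-1)^(-β) := by ring

lemma tail_pointwise (hβ1 : 1 < β) (hβ2 : β < 2) (hz : 1 < z) {θ : ℝ}
    (hθpos : 0 < θ) (hθπ : θ ≤ Real.pi) :
    (z - Real.cos θ) ^ (-β) ≤ 25 * θ ^ (-(2*β)) := by
  have hπ2 : Real.pi^2 ≤ 10 := by nlinarith [Real.pi_lt_d2, Real.pi_pos]
  have hcos : Real.cos θ ≤ 1 - 2/Real.pi^2 * θ^2 :=
    Real.cos_le_one_sub_mul_cos_sq (by rw [abs_of_pos hθpos]; exact hθπ)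
  have hπpos : (0:ℝ) < Real.pi := Real.pi_pos
  have hbase : θ^2/5 ≤ z - Real.cos θ := by
    have h5 : (1:ℝ)/5 ≤ 2/Real.pi^2 := by
      rw [div_le_div_iff₀ (by norm_num) (by positivity)]
      linarith
    have h2 : θ^2/5 ≤ 2/Real.pi^2 * θ^2 := by nlinarith [sq_nonneg θ]
    nlinarith
  have hf : (z - Real.cos θ)^(-β) ≤ (θ^2/5)^(-β) :=
    Real.rpow_le_rpow_of_nonpos (by positivity) hbase (by linarith)
  have he : (θ^2/5 : ℝ)^(-β) = (θ^2)^(-β) * 5^β := by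
    rw [Real.div_rpow (sq_nonneg θ) (by norm_num : (0:ℝ) ≤ 5),
      Real.rpow_neg (by norm_num : (0:ℝ) ≤ 5)]
    field_simp
  have he2 : ((θ:ℝ)^2)^(-β) = θ ^ (-(2*β)) := by
    rw [← Real.rpow_natCast θ 2, ← Real.rpow_mul hθpos.le]
    norm_num
  have h5 : (5:ℝ)^β ≤ 25 := by
    have : (5:ℝ)^β ≤ 5^(2:ℝ) := Real.rpow_le_rpow_of_exponent_le (by norm_num) hβ2.le
    have h2 : (5:ℝ)^(2:ℝ) = 25 := by
      rw [show ((2:ℝ)) = ((2:ℕ):ℝ) by norm_num, Real.rpow_natCast]; norm_num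
    linarith
  have hθnn : 0 ≤ θ ^ (-(2*β)) := Real.rpow_nonneg hθpos.le _
  calc (z - Real.cos θ)^(-β) ≤ (θ^2/5)^(-β) := hf
    _ = θ ^ (-(2*β)) * 5^β := by rw [he, he2]
    _ ≤ θ ^ (-(2*β)) * 25 := by nlinarith
    _ = 25 * θ ^ (-(2*β)) := by ring

lemma tail_integral (hβ1 : 1 < β) (hβ2 : β < 2) (hz : 1 < z) {θ0 : ℝ}
    (hθ0pos : 0 < θ0) (hθ0le : θ0 ≤ 1) :
    (∫ θ in θ0..Real.pi, (z - Real.cos θ) ^ (-β))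
      ≤ 25 * (θ0 ^ (-(2*β)+1)) / (2*β-1) := by
  have hπ3 : (3:ℝ) < Real.pi := Real.pi_gt_three
  have hθ0π : θ0 ≤ Real.pi := by linarith
  have hcont : ContinuousOn (fun θ : ℝ => 25 * θ ^ (-(2*β))) (uIcc θ0 Real.pi) := by
    rw [uIcc_of_le hθ0π]
    intro x hx
    have hxpos : 0 < x := lt_of_lt_of_le hθ0pos hx.1
    exact (continuousAt_const.mul
      (Real.continuousAt_rpow_const x _ (Or.inl hxpos.ne'))).continuousWithinAt
  have hintg : IntervalIntegrable (fun θ : ℝ => 25 * θ ^ (-(2*β))) volume θ0 Real.pi :=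
    hcont.intervalIntegrable
  have hmono : (∫ θ in θ0..Real.pi, (z - Real.cos θ) ^ (-β))
      ≤ ∫ θ in θ0..Real.pi, 25 * θ ^ (-(2*β)) := by
    apply intervalIntegral.integral_mono_on hθ0π (intg_f hz _ _) hintg
    intro θ hθ
    exact tail_pointwise hβ1 hβ2 hz (lt_of_lt_of_le hθ0pos hθ.1) hθ.2
  have hval : (∫ θ in θ0..Real.pi, θ ^ (-(2*β)))
      = (Real.pi ^ (-(2*β)+1) - θ0 ^ (-(2*β)+1)) / (-(2*β)+1) := by
    apply integral_rpow
    right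
    constructor
    · intro h; rw [neg_eq_iff_eq_neg] at h; nlinarith [h]
    · rw [uIcc_of_le hθ0π]
      intro h
      exact absurd h.1 (by linarith)
  have hbound : (Real.pi ^ (-(2*β)+1) - θ0 ^ (-(2*β)+1)) / (-(2*β)+1)
      ≤ θ0 ^ (-(2*β)+1) / (2*β-1) := by
    have hπnn : 0 ≤ Real.pi ^ (-(2*β)+1) := Real.rpow_nonneg Real.pi_pos.le _
    have hd : (0:ℝ) < 2*β - 1 := by linarith
    have he : (Real.pi ^ (-(2*β)+1) - θ0 ^ (-(2*β)+1)) / (-(2*β)+1)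
        = (θ0 ^ (-(2*β)+1) - Real.pi ^ (-(2*β)+1)) / (2*β-1) := by
      rw [show (-(2*β)+1) = -(2*β-1) by ring, div_neg]
      ring
    rw [he, div_le_div_iff₀ hd hd]
    nlinarith
  calc (∫ θ in θ0..Real.pi, (z - Real.cos θ) ^ (-β))
      ≤ ∫ θ in θ0..Real.pi, 25 * θ ^ (-(2*β)) := hmono
    _ = 25 * ∫ θ in θ0..Real.pi, θ ^ (-(2*β)) := intervalIntegral.integral_const_mul _ _
    _ ≤ 25 * (θ0 ^ (-(2*β)+1) / (2*β-1)) := by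
        rw [hval]; nlinarith [hbound]
    _ = 25 * (θ0 ^ (-(2*β)+1)) / (2*β-1) := by ring


lemma I_upper_small (hβ1 : 1 < β) (hβ2 : β < 2) (hz : 1 < z)
    (h12 : Real.sqrt (z-1) ≤ 1/2) :
    (∫ θ in (-Real.pi)..Real.pi, (z - Real.cos θ) ^ (-β))
      ≤ (2 + 50/(2*β-1)) * Real.sqrt (z-1) * (z-1)^(-β) := by
  set θ0 := Real.sqrt (z-1) with hθ0def
  have hε : 0 < z - 1 := by linarith
  have hθ0pos : 0 < θ0 := Real.sqrt_pos.2 hε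
  have hθ0le : θ0 ≤ 1 := by linarith
  have hπ3 : (3:ℝ) < Real.pi := Real.pi_gt_three
  have hsq : θ0^2 = z - 1 := Real.sq_sqrt hε.le
  have h1 := intervalIntegral.integral_add_adjacent_intervals
    (a := -Real.pi) (b := -θ0) (c := θ0) (intg_f (β := β) hz _ _) (intg_f (β := β) hz _ _)
  have h2 := intervalIntegral.integral_add_adjacent_intervals
    (a := -Real.pi) (b := θ0) (c := Real.pi) (intg_f (β := β) hz _ _) (intg_f (β := β) hz _ _)
  have hneg : (∫ θ in (-Real.pi)..(-θ0), (z - Real.cos θ)^(-β))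
      = ∫ θ in θ0..Real.pi, (z - Real.cos θ)^(-β) := by
    have := intervalIntegral.integral_comp_neg (a := θ0) (b := Real.pi)
      (fun θ => (z - Real.cos θ)^(-β))
    simp only [Real.cos_neg] at this
    exact this.symm
  have hmid : (∫ θ in (-θ0)..θ0, (z - Real.cos θ)^(-β)) ≤ 2*θ0 * (z-1)^(-β) := by
    have h : ∀ θ ∈ Icc (-θ0) θ0, (z - Real.cos θ)^(-β) ≤ (z-1)^(-β) := by
      intro θ _
      exact Real.rpow_le_rpow_of_nonpos (by linarith)
        (by have := Real.cos_le_one θ; linarith) (by linarith)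
    have := intervalIntegral.integral_mono_on (by linarith)
      (intg_f hz _ _) (intervalIntegrable_const) h
    rw [intervalIntegral.integral_const, smul_eq_mul] at this
    calc (∫ θ in (-θ0)..θ0, (z - Real.cos θ)^(-β)) ≤ (θ0 - -θ0) * (z-1)^(-β) := this
      _ = 2*θ0 * (z-1)^(-β) := by ring
  have htail := tail_integral hβ1 hβ2 hz hθ0pos hθ0le
  have he : θ0 ^ (-(2*β)+1) = (z-1)^(-β) * θ0 := by
    rw [Real.rpow_add hθ0pos, Real.rpow_one]
    congr 1
    rw [← hsq, ← Real.rpow_natCast θ0 2, ← Real.rpow_mul hθ0pos.le]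
    norm_num
  rw [he] at htail
  have hd : (0:ℝ) < 2*β-1 := by linarith
  have hεp : (0:ℝ) < (z-1)^(-β) := Real.rpow_pos_of_pos hε _
  have : (∫ θ in (-Real.pi)..Real.pi, (z - Real.cos θ) ^ (-β))
      = (∫ θ in (-Real.pi)..(-θ0), (z - Real.cos θ)^(-β))
        + (∫ θ in (-θ0)..θ0, (z - Real.cos θ)^(-β))
        + (∫ θ in θ0..Real.pi, (z - Real.cos θ)^(-β)) := by
    rw [h1, h2]
  rw [this, hneg]
  have h50 : 25 * ((z-1)^(-β) * θ0) / (2*β-1) = (25/(2*β-1)) * θ0 * (z-1)^(-β) := by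
    field_simp
  rw [h50] at htail
  have hdist : (2 + 50/(2*β-1)) * θ0 * (z-1)^(-β)
      = 2*θ0*(z-1)^(-β) + 2*(25/(2*β-1)*θ0*(z-1)^(-β)) := by ring
  linarith [htail, hmid, hdist]

theorem main (hβ1 : 1 < β) (hβ2 : β < 2) (hz : 1 < z) :
    (z - 1) / z * ∫ θ in (-Real.pi)..Real.pi, (z - Real.cos θ) ^ (-β)
      ≤ (432*Real.pi + 27*(2 + 50/(2*β-1)))
        * ∫ θ in (-Real.pi)..Real.pi, (z - Real.cos θ) ^ (-β) * Real.sin θ ^ 2 := by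
  set A : ℝ := 2 + 50/(2*β-1) with hA
  have hd : (0:ℝ) < 2*β-1 := by linarith
  have hApos : 0 < A := by positivity
  have hε : 0 < z - 1 := by linarith
  have hπ : (0:ℝ) < Real.pi := Real.pi_pos
  set S := ∫ θ in (-Real.pi)..Real.pi, (z - Real.cos θ) ^ (-β) * Real.sin θ ^ 2 with hSdef
  set I := ∫ θ in (-Real.pi)..Real.pi, (z - Real.cos θ) ^ (-β) with hIdef
  have hS0 : 0 ≤ S := by
    apply intervalIntegral.integral_nonneg (by linarith)
    exact fun θ _ => mul_nonneg (f_nonneg hz θ) (sq_nonneg _)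
  have hI0 : 0 ≤ I := by
    apply intervalIntegral.integral_nonneg (by linarith)
    exact fun θ _ => f_nonneg hz θ
  have hεp : (0:ℝ) < (z-1)^(-β) := Real.rpow_pos_of_pos hε _
  rcases le_or_gt (Real.sqrt (z-1)) (1/2) with hsmall | hbig
  · -- small case
    have hmin : min (Real.sqrt (z-1)) (1/2) = Real.sqrt (z-1) := min_eq_left hsmall
    have hSlow := S_lower hβ1 hβ2 hz
    rw [hmin] at hSlow
    set θ0 := Real.sqrt (z-1) with hθ0def
    have hθ0pos : 0 < θ0 := Real.sqrt_pos.2 hε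
    have hsq : θ0^2 = z - 1 := Real.sq_sqrt hε.le
    have hIup := I_upper_small hβ1 hβ2 hz hsmall
    have step1 : (z-1)/z * I ≤ (z-1) * I := by
      apply mul_le_mul_of_nonneg_right _ hI0
      rw [div_le_iff₀ (by linarith)]
      nlinarith
    have step2 : (z-1) * I ≤ (z-1) * (A * θ0 * (z-1)^(-β)) :=
      mul_le_mul_of_nonneg_left hIup hε.le
    have step3 : (z-1) * (A * θ0 * (z-1)^(-β)) = 27*A * (θ0^3 * (z-1)^(-β)/27) := by
      rw [← hsq]; ring
    have step4 : 27*A * (θ0^3 * (z-1)^(-β)/27) ≤ 27*A*S :=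
      mul_le_mul_of_nonneg_left hSlow (by positivity)
    nlinarith [mul_nonneg hπ.le hS0]
  · -- big case
    have hmin : min (Real.sqrt (z-1)) (1/2) = 1/2 := min_eq_right hbig.le
    have hSlow := S_lower hβ1 hβ2 hz
    rw [hmin] at hSlow
    have hS216 : (z-1)^(-β)/216 ≤ S := by
      calc (z-1)^(-β)/216 = (1/2:ℝ)^3 * (z-1)^(-β)/27 := by ring
        _ ≤ S := hSlow
    have hIup : I ≤ 2*Real.pi * (z-1)^(-β) := I_upper_const hβ1 hz
    have step1 : (z-1)/z * I ≤ I := by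
      apply mul_le_mul_of_nonneg_right _ hI0 |>.trans_eq (one_mul I)
      rw [div_le_one (by linarith)]; linarith
    have hmidstep : 2*Real.pi*(z-1)^(-β) ≤ 432*Real.pi*S := by
      have := mul_le_mul_of_nonneg_left hS216 Real.pi_pos.le
      linarith
    calc (z-1)/z * I ≤ I := step1
      _ ≤ 2*Real.pi*(z-1)^(-β) := hIup
      _ ≤ 432*Real.pi*S := hmidstep
      _ ≤ (432*Real.pi + 27*A)*S := by nlinarith [mul_nonneg hApos.le hS0]

end Stmt4Aux

/-- For fixed `1 < β < 2` there is a constant `C = C(β) > 0` such that for every `z > 1`,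
`((z-1)/z) ∫ (z-cosθ)^{-β} dθ ≤ C ∫ (z-cosθ)^{-β} (1 - z cosθ) dθ`. -/
theorem stmt_4 (β : ℝ) (hβ1 : 1 < β) (hβ2 : β < 2) :
    ∃ C : ℝ, 0 < C ∧ ∀ z : ℝ, 1 < z →
      (z - 1) / z * ∫ θ in (-Real.pi)..Real.pi, (z - Real.cos θ) ^ (-β)
        ≤ C * ∫ θ in (-Real.pi)..Real.pi, (z - Real.cos θ) ^ (-β) * (1 - z * Real.cos θ) := by
  have hd : (0:ℝ) < 2*β-1 := by linarith
  have h2β : (0:ℝ) < 2-β := by linarith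
  refine ⟨(432*Real.pi + 27*(2 + 50/(2*β-1)))/(2-β), ?_, ?_⟩
  · apply div_pos _ h2β
    have := Real.pi_pos
    positivity
  · intro z hz
    rw [Stmt4Aux.ibp hβ1 hz]
    have he : (432*Real.pi + 27*(2 + 50/(2*β-1)))/(2-β)
        * ((2-β) * ∫ θ in (-Real.pi)..Real.pi, (z - Real.cos θ) ^ (-β) * Real.sin θ ^ 2)
        = (432*Real.pi + 27*(2 + 50/(2*β-1)))
          * ∫ θ in (-Real.pi)..Real.pi, (z - Real.cos θ) ^ (-β) * Real.sin θ ^ 2 := by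
      field_simp
    rw [he]
    exact Stmt4Aux.main hβ1 hβ2 hz
end

section
/- For real numbers r, s > 0 with r ≠ s, consider I(r, s) := ∫_{-π}^{π} (r − s cos θ)/(r² + s² − 2 r s cos θ) dθ. Then: (a) if 0 < r < s, then I(r, s) = 0; (b) if r > s > 0, then I(r, s) > 0. -/
/-- For `I(r,s) = ∫_{-π}^{π} (r - s cosθ)/(r² + s² - 2rs cosθ) dθ` with `r, s > 0`:
(a) if `r < s` then `I(r,s) = 0`; (b) if `r > s` then `I(r,s) > 0`. -/
theorem stmt_7 (r s : ℝ) (hr : 0 < r) (hs : 0 < s) :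
    (r < s → (∫ θ in (-Real.pi)..Real.pi,
        (r - s * Real.cos θ) / (r ^ 2 + s ^ 2 - 2 * r * s * Real.cos θ)) = 0)
    ∧ (s < r → 0 < ∫ θ in (-Real.pi)..Real.pi,
        (r - s * Real.cos θ) / (r ^ 2 + s ^ 2 - 2 * r * s * Real.cos θ)) := by
  constructor
  · intro hlt
    have hrs : 0 < (r - s) ^ 2 := by
      have : r - s ≠ 0 := sub_ne_zero.2 (ne_of_lt hlt)
      positivity
    have hD : ∀ θ : ℝ, 0 < r ^ 2 + s ^ 2 - 2 * r * s * Real.cos θ := by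
      intro θ
      nlinarith [Real.cos_le_one θ, mul_pos hr hs]
    have hcont : Continuous fun θ : ℝ =>
        (r - s * Real.cos θ) / (r ^ 2 + s ^ 2 - 2 * r * s * Real.cos θ) := by
      apply Continuous.div (by continuity) (by continuity)
      exact fun θ => ne_of_gt (hD θ)
    have hv : ∀ θ : ℝ, 0 < s - r * Real.cos θ := by
      intro θ
      nlinarith [Real.cos_le_one θ]
    have hF : ∀ θ ∈ Set.uIcc (-Real.pi) Real.pi,
        HasDerivAt (fun x => -(1/r) * Real.arctan (r * Real.sin x / (s - r * Real.cos x)))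
          ((r - s * Real.cos θ) / (r ^ 2 + s ^ 2 - 2 * r * s * Real.cos θ)) θ := by
      intro θ _
      have hv0 : s - r * Real.cos θ ≠ 0 := ne_of_gt (hv θ)
      have hD0 : r ^ 2 + s ^ 2 - 2 * r * s * Real.cos θ ≠ 0 := ne_of_gt (hD θ)
      have hpyth := Real.sin_sq_add_cos_sq θ
      have hu : HasDerivAt (fun x : ℝ => r * Real.sin x) (r * Real.cos θ) θ :=
        (Real.hasDerivAt_sin θ).const_mul r
      have hw : HasDerivAt (fun x : ℝ => s - r * Real.cos x) (r * Real.sin θ) θ := by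
        have := ((Real.hasDerivAt_cos θ).const_mul r).const_sub s
        simpa using this
      have hq := hu.div hw hv0
      have ha := (Real.hasDerivAt_arctan (r * Real.sin θ / (s - r * Real.cos θ))).comp θ hq
      have hb := ha.const_mul (-(1/r))
      refine hb.congr_deriv (Eq.symm ?_)
      have h1 : 1 + (r * Real.sin θ / (s - r * Real.cos θ))^2
          = (r^2+s^2-2*r*s*Real.cos θ) / (s - r*Real.cos θ)^2 := by
        field_simp
        linear_combination (r^2) * hpyth
      have hN : r * Real.cos θ * (s - r * Real.cos θ) - r * Real.sin θ * (r * Real.sin θ)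
          = r*s*Real.cos θ - r^2 := by linear_combination (-(r^2)) * hpyth
      rw [hN, h1, one_div_div]
      field_simp
      ring
    rw [intervalIntegral.integral_eq_sub_of_hasDerivAt hF (hcont.intervalIntegrable _ _)]
    simp
  · intro hlt
    have hrs : 0 < (r - s) ^ 2 := by
      have : r - s ≠ 0 := sub_ne_zero.2 (ne_of_gt hlt)
      positivity
    have hD : ∀ θ : ℝ, 0 < r ^ 2 + s ^ 2 - 2 * r * s * Real.cos θ := by
      intro θ
      nlinarith [Real.cos_le_one θ, mul_pos hr hs]
    have hcont : Continuous fun θ : ℝ =>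
        (r - s * Real.cos θ) / (r ^ 2 + s ^ 2 - 2 * r * s * Real.cos θ) := by
      apply Continuous.div (by continuity) (by continuity)
      exact fun θ => ne_of_gt (hD θ)
    have hv : ∀ θ : ℝ, 0 < r - s * Real.cos θ := by
      intro θ
      nlinarith [Real.cos_le_one θ]
    have hF : ∀ θ ∈ Set.uIcc (-Real.pi) Real.pi,
        HasDerivAt (fun x => (1/r) * (x + Real.arctan (s * Real.sin x / (r - s * Real.cos x))))
          ((r - s * Real.cos θ) / (r ^ 2 + s ^ 2 - 2 * r * s * Real.cos θ)) θ := by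
      intro θ _
      have hv0 : r - s * Real.cos θ ≠ 0 := ne_of_gt (hv θ)
      have hD0 : r ^ 2 + s ^ 2 - 2 * r * s * Real.cos θ ≠ 0 := ne_of_gt (hD θ)
      have hpyth := Real.sin_sq_add_cos_sq θ
      have hu : HasDerivAt (fun x : ℝ => s * Real.sin x) (s * Real.cos θ) θ :=
        (Real.hasDerivAt_sin θ).const_mul s
      have hw : HasDerivAt (fun x : ℝ => r - s * Real.cos x) (s * Real.sin θ) θ := by
        have := ((Real.hasDerivAt_cos θ).const_mul s).const_sub r
        simpa using this
      have hq := hu.div hw hv0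
      have ha := (Real.hasDerivAt_arctan (s * Real.sin θ / (r - s * Real.cos θ))).comp θ hq
      have hb := ((hasDerivAt_id θ).add ha).const_mul (1/r)
      refine hb.congr_deriv (Eq.symm ?_)
      have h1 : 1 + (s * Real.sin θ / (r - s * Real.cos θ))^2
          = (r^2+s^2-2*r*s*Real.cos θ) / (r - s*Real.cos θ)^2 := by
        field_simp
        linear_combination (s^2) * hpyth
      have hN : s * Real.cos θ * (r - s * Real.cos θ) - s * Real.sin θ * (s * Real.sin θ)
          = r*s*Real.cos θ - s^2 := by linear_combination (-(s^2)) * hpyth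
      rw [hN, h1, one_div_div]
      field_simp
      have hD' : r ^ 2 + s ^ 2 - r * s * Real.cos θ * 2 ≠ 0 := by
        contrapose! hD0; linarith
      rw [div_eq_iff hD', add_mul, div_mul_cancel₀ _ hD']
      ring
    rw [intervalIntegral.integral_eq_sub_of_hasDerivAt hF (hcont.intervalIntegrable _ _)]
    simp only [Real.sin_pi, Real.sin_neg, Real.sin_pi, neg_zero, zero_mul, mul_zero, zero_div,
      Real.arctan_zero, add_zero]
    have hpi := Real.pi_pos
    rw [show (1:ℝ)/r * Real.pi - 1/r * -Real.pi = 2 * Real.pi / r by ring]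
    positivity
end

section
/- Fix 0 < κ < 1. Then there exists a constant c_κ > 0, depending only on κ, such that for all real numbers 0 < r₁* ≤ r₁ < R₁: ∫_{−κ r₁*}^{κ r₁*} ( √(R₁² − x²) − √(r₁² − x²) ) dx ≥ c_κ ∫_{−r₁*}^{r₁*} ( √(R₁² − x²) − √(r₁² − x²) ) dx. -/
open intervalIntegral MeasureTheory

private lemma sqrt_lower {r R x : ℝ} (hr : 0 < r) (hrR : r < R) (hx : x ^ 2 ≤ r ^ 2) :
    R - r ≤ Real.sqrt (R ^ 2 - x ^ 2) - Real.sqrt (r ^ 2 - x ^ 2) := by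
  set a := Real.sqrt (R ^ 2 - x ^ 2) with ha
  set b := Real.sqrt (r ^ 2 - x ^ 2) with hb
  have hR2 : x ^ 2 ≤ R ^ 2 := hx.trans (by nlinarith)
  have ha2 : a ^ 2 = R ^ 2 - x ^ 2 := Real.sq_sqrt (by linarith)
  have hb2 : b ^ 2 = r ^ 2 - x ^ 2 := Real.sq_sqrt (by linarith)
  have ha0 : 0 ≤ a := Real.sqrt_nonneg _
  have hb0 : 0 ≤ b := Real.sqrt_nonneg _
  have haR : a ≤ R := by
    rw [ha]
    calc Real.sqrt (R ^ 2 - x ^ 2) ≤ Real.sqrt (R ^ 2) := Real.sqrt_le_sqrt (by nlinarith)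
    _ = R := by rw [Real.sqrt_sq (by linarith)]
  have hbr : b ≤ r := by
    rw [hb]
    calc Real.sqrt (r ^ 2 - x ^ 2) ≤ Real.sqrt (r ^ 2) := Real.sqrt_le_sqrt (by nlinarith)
    _ = r := by rw [Real.sqrt_sq (by linarith)]
  have hapos : 0 < a := by
    rw [ha]
    apply Real.sqrt_pos.2
    nlinarith
  nlinarith [mul_pos hapos (add_pos_of_pos_of_nonneg hapos hb0)]

private lemma sqrt_upper {r R x rs : ℝ} (hrs : 0 < rs) (hrsr : rs ≤ r) (hrR : r < R)
    (hx0 : 0 ≤ x) (hxrs : x ≤ rs) :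
    Real.sqrt (R ^ 2 - x ^ 2) - Real.sqrt (r ^ 2 - x ^ 2) ≤
      (R ^ 2 - r ^ 2) / Real.sqrt R * (1 / Real.sqrt (R - x)) := by
  set a := Real.sqrt (R ^ 2 - x ^ 2) with ha
  set b := Real.sqrt (r ^ 2 - x ^ 2) with hb
  have hr : 0 < r := lt_of_lt_of_le hrs hrsr
  have hxr : x ^ 2 ≤ r ^ 2 := by nlinarith
  have hR2 : x ^ 2 ≤ R ^ 2 := hxr.trans (by nlinarith)
  have ha2 : a ^ 2 = R ^ 2 - x ^ 2 := Real.sq_sqrt (by linarith)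
  have hb2 : b ^ 2 = r ^ 2 - x ^ 2 := Real.sq_sqrt (by linarith)
  have hb0 : 0 ≤ b := Real.sqrt_nonneg _
  have hapos : 0 < a := by
    rw [ha]; apply Real.sqrt_pos.2; nlinarith
  have hba : b ≤ a := by
    rw [ha, hb]; exact Real.sqrt_le_sqrt (by nlinarith)
  -- Step 1 : a - b ≤ (R^2 - r^2)/a
  have h1 : a - b ≤ (R ^ 2 - r ^ 2) / a := by
    rw [le_div_iff₀ hapos]
    nlinarith
  -- Step 2 : √R * √(R-x) ≤ a
  have h2 : Real.sqrt R * Real.sqrt (R - x) ≤ a := by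
    rw [ha, ← Real.sqrt_mul (by linarith : (0:ℝ) ≤ R)]
    exact Real.sqrt_le_sqrt (by nlinarith)
  have hsR : 0 < Real.sqrt R := Real.sqrt_pos.2 (by linarith)
  have hsRx : 0 < Real.sqrt (R - x) := Real.sqrt_pos.2 (by linarith)
  have h3 : (R ^ 2 - r ^ 2) / a ≤ (R ^ 2 - r ^ 2) / (Real.sqrt R * Real.sqrt (R - x)) :=
    div_le_div_of_nonneg_left (by nlinarith) (mul_pos hsR hsRx) h2
  calc a - b ≤ (R ^ 2 - r ^ 2) / a := h1
    _ ≤ (R ^ 2 - r ^ 2) / (Real.sqrt R * Real.sqrt (R - x)) := h3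
    _ = (R ^ 2 - r ^ 2) / Real.sqrt R * (1 / Real.sqrt (R - x)) := by
        field_simp

private lemma integral_inv_sqrt_sub {R rs : ℝ} (hrs : 0 < rs) (hrsR : rs < R) :
    ∫ x in (0:ℝ)..rs, (1 / Real.sqrt (R - x)) =
      2 * Real.sqrt R - 2 * Real.sqrt (R - rs) := by
  have key : ∀ x ∈ Set.uIcc (0:ℝ) rs,
      HasDerivAt (fun y => -2 * Real.sqrt (R - y)) (1 / Real.sqrt (R - x)) x := by
    intro x hx
    rw [Set.uIcc_of_le hrs.le] at hx
    have hRx : 0 < R - x := by cases hx; linarith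
    have h1 : HasDerivAt (fun y : ℝ => R - y) (-1) x := (hasDerivAt_id x).const_sub R
    have h2 := (Real.hasDerivAt_sqrt (ne_of_gt hRx)).comp x h1
    have h3 := h2.const_mul (-2 : ℝ)
    convert h3 using 1
    · rfl
    · rfl
    · rfl
    have : Real.sqrt (R - x) ≠ 0 := ne_of_gt (Real.sqrt_pos.2 hRx)
    field_simp
  have hint : IntervalIntegrable (fun x => 1 / Real.sqrt (R - x)) volume 0 rs := by
    apply ContinuousOn.intervalIntegrable
    apply ContinuousOn.div continuousOn_const
    · exact (Real.continuous_sqrt.comp (continuous_const.sub continuous_id)).continuousOn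
    · intro x hx
      rw [Set.uIcc_of_le hrs.le] at hx
      have hRx : 0 < R - x := by cases hx; linarith
      exact ne_of_gt (Real.sqrt_pos.2 hRx)
  rw [intervalIntegral.integral_eq_sub_of_hasDerivAt key hint]
  ring

/-- For fixed `0 < κ < 1` there is `c_κ > 0` (independent of `r₁/R₁`) such that for all
`0 < r₁* ≤ r₁ < R₁`, the mass of the annulus slice over `|x| ≤ κ r₁*` controls the mass
over `|x| ≤ r₁*`. -/
theorem stmt_12 (κ : ℝ) (hκ0 : 0 < κ) (hκ1 : κ < 1) :
    ∃ c : ℝ, 0 < c ∧ ∀ rs r₁ R₁ : ℝ, 0 < rs → rs ≤ r₁ → r₁ < R₁ →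
      c * ∫ x in (-rs)..rs, (Real.sqrt (R₁ ^ 2 - x ^ 2) - Real.sqrt (r₁ ^ 2 - x ^ 2))
        ≤ ∫ x in (-(κ * rs))..(κ * rs),
            (Real.sqrt (R₁ ^ 2 - x ^ 2) - Real.sqrt (r₁ ^ 2 - x ^ 2)) := by
  refine ⟨κ / 4, by positivity, fun rs r R hrs hrr hrR => ?_⟩
  have hr : 0 < r := lt_of_lt_of_le hrs hrr
  have hR : 0 < R := hr.trans hrR
  set f : ℝ → ℝ := fun x => Real.sqrt (R ^ 2 - x ^ 2) - Real.sqrt (r ^ 2 - x ^ 2) with hf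
  have hcont : Continuous f := by
    apply Continuous.sub
    · exact Real.continuous_sqrt.comp (continuous_const.sub (continuous_pow 2))
    · exact Real.continuous_sqrt.comp (continuous_const.sub (continuous_pow 2))
  have hκrs : 0 < κ * rs := mul_pos hκ0 hrs
  -- Lower bound on the small integral
  have hlow : 2 * (κ * rs) * (R - r) ≤ ∫ x in (-(κ * rs))..(κ * rs), f x := by
    have hmono : ∫ x in (-(κ * rs))..(κ * rs), (R - r) ≤ ∫ x in (-(κ * rs))..(κ * rs), f x := by
      apply intervalIntegral.integral_mono_on (by linarith)
        intervalIntegrable_const (hcont.intervalIntegrable _ _)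
      intro x hx
      obtain ⟨hx1, hx2⟩ := hx
      have hxs : x ^ 2 ≤ r ^ 2 := by
        have h1 : x ^ 2 ≤ (κ * rs) ^ 2 := sq_le_sq' hx1 hx2
        have h2 : κ * rs ≤ r := by nlinarith
        nlinarith
      exact sqrt_lower hr hrR hxs
    rw [intervalIntegral.integral_const, smul_eq_mul] at hmono
    calc 2 * (κ * rs) * (R - r) = (κ * rs - -(κ * rs)) * (R - r) := by ring
      _ ≤ _ := hmono
  -- Upper bound on the positive half of the big integral
  have hup : ∫ x in (0:ℝ)..rs, f x ≤ 4 * rs * (R - r) := by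
    have hmono : ∫ x in (0:ℝ)..rs, f x ≤
        ∫ x in (0:ℝ)..rs, ((R ^ 2 - r ^ 2) / Real.sqrt R * (1 / Real.sqrt (R - x))) := by
      apply intervalIntegral.integral_mono_on hrs.le (hcont.intervalIntegrable _ _)
      · apply IntervalIntegrable.const_mul
        apply ContinuousOn.intervalIntegrable
        apply ContinuousOn.div continuousOn_const
        · exact (Real.continuous_sqrt.comp (continuous_const.sub continuous_id)).continuousOn
        · intro x hx
          rw [Set.uIcc_of_le hrs.le] at hx
          have hRx : 0 < R - x := by cases hx; linarith
          exact ne_of_gt (Real.sqrt_pos.2 hRx)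
      · intro x hx
        obtain ⟨hx1, hx2⟩ := hx
        exact sqrt_upper hrs hrr hrR hx1 hx2
    rw [intervalIntegral.integral_const_mul, integral_inv_sqrt_sub hrs (lt_of_le_of_lt hrr hrR)]
      at hmono
    -- now bound the explicit value
    have hval : (R ^ 2 - r ^ 2) / Real.sqrt R * (2 * Real.sqrt R - 2 * Real.sqrt (R - rs)) ≤
        4 * rs * (R - r) := by
      set s := Real.sqrt R with hs
      set t := Real.sqrt (R - rs) with ht
      have hs2 : s ^ 2 = R := Real.sq_sqrt hR.le
      have ht2 : t ^ 2 = R - rs := Real.sq_sqrt (by linarith)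
      have hspos : 0 < s := Real.sqrt_pos.2 hR
      have ht0 : 0 ≤ t := Real.sqrt_nonneg _
      have hts : t ≤ s := Real.sqrt_le_sqrt (by linarith)
      rw [div_mul_eq_mul_div, div_le_iff₀ hspos]
      -- 2 (R²−r²)(s−t) ≤ 4 rs (R−r) s  ;  s(s−t) ≤ rs
      have hkey : s * (s - t) ≤ rs := by nlinarith
      nlinarith [mul_nonneg (sub_nonneg.2 hts) (sub_nonneg.2 hrR.le),
        mul_nonneg (mul_nonneg (sub_nonneg.2 hts) (sub_nonneg.2 hrR.le)) hr.le,
        mul_le_mul_of_nonneg_left hkey (by nlinarith : (0:ℝ) ≤ 4 * (R - r) * s)]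
    linarith
  -- Evenness: negative half equals positive half
  have hnegpos : ∫ x in (-rs)..(0:ℝ), f x = ∫ x in (0:ℝ)..rs, f x := by
    have := intervalIntegral.integral_comp_neg (a := (0:ℝ)) (b := rs) (f := f)
    rw [neg_zero] at this
    rw [← this]
    apply intervalIntegral.integral_congr
    intro x _
    simp [hf, neg_pow, neg_sq]
  have hsplit : (∫ x in (-rs)..(0:ℝ), f x) + (∫ x in (0:ℝ)..rs, f x) = ∫ x in (-rs)..rs, f x :=
    intervalIntegral.integral_add_adjacent_intervals (hcont.intervalIntegrable _ _)
      (hcont.intervalIntegrable _ _)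
  have htot : ∫ x in (-rs)..rs, f x ≤ 8 * rs * (R - r) := by
    rw [← hsplit, hnegpos]; linarith
  have htot0 : 0 ≤ R - r := by linarith
  calc κ / 4 * ∫ x in (-rs)..rs, f x ≤ κ / 4 * (8 * rs * (R - r)) := by
        apply mul_le_mul_of_nonneg_left htot (by positivity)
    _ = 2 * (κ * rs) * (R - r) := by ring
    _ ≤ _ := hlow
end

section
/- Let m > 1. Then there exists a constant C_m > 0, depending only on m, with the following property: for every R > 0 and every nonincreasing nonnegative function ρ : [R, 4R] → [0, ∞), there exists r ∈ [R, 2R] such that ∫_{r}^{4R} ρ(x)^m dx ≤ a ∫_{r}^{4R} (x − r) ρ(x) dx, where a = (C_m / R) ρ(R)^{m−1}. -/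
open MeasureTheory Set intervalIntegral

private lemma lc_sub {R u v : ℝ} (h1 : R ≤ u) (h2 : u ≤ 4*R) (h3 : R ≤ v) (h4 : v ≤ 4*R) :
    Set.uIcc u v ⊆ Set.Icc R (4*R) := by
  intro x hx
  rcases le_total u v with h | h
  · rw [Set.uIcc_of_le h] at hx; exact ⟨by linarith [hx.1], by linarith [hx.2]⟩
  · rw [Set.uIcc_of_ge h] at hx; exact ⟨by linarith [hx.1], by linarith [hx.2]⟩

/-- The tail bound: `(w - v) * ρ w ≤ ∫_v^{4R} ρ`. -/
private lemma lc_tail {R : ℝ} (hR : 0 < R) {ρ : ℝ → ℝ}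
    (hnn : ∀ x ∈ Set.Icc R (4*R), 0 ≤ ρ x) (hmono : AntitoneOn ρ (Set.Icc R (4*R)))
    {v w : ℝ} (hv : R ≤ v) (hvw : v ≤ w) (hw : w ≤ 4*R) :
    (w - v) * ρ w ≤ ∫ x in v..(4*R), ρ x := by
  have hvmem : v ∈ Set.Icc R (4*R) := ⟨hv, by linarith⟩
  have hwmem : w ∈ Set.Icc R (4*R) := ⟨by linarith, hw⟩
  have h4mem : (4*R) ∈ Set.Icc R (4*R) := ⟨by linarith, le_refl _⟩
  have hi1 : IntervalIntegrable ρ volume v w :=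
    (hmono.mono (lc_sub hv (by linarith) (by linarith) hw)).intervalIntegrable
  have hi2 : IntervalIntegrable ρ volume w (4*R) :=
    (hmono.mono (lc_sub (by linarith) hw (by linarith) (le_refl _))).intervalIntegrable
  have hsplit : (∫ x in v..(4*R), ρ x) = (∫ x in v..w, ρ x) + ∫ x in w..(4*R), ρ x :=
    (integral_add_adjacent_intervals hi1 hi2).symm
  have h1 : (w - v) * ρ w ≤ ∫ x in v..w, ρ x := by
    have := integral_mono_on hvw (_root_.intervalIntegrable_const (c := ρ w)) hi1
      (fun x hx => hmono ⟨by linarith [hx.1], by linarith [hx.2]⟩ hwmem hx.2)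
    simpa [smul_eq_mul, mul_comm] using this
  have h2 : 0 ≤ ∫ x in w..(4*R), ρ x :=
    intervalIntegral.integral_nonneg (by linarith)
      (fun u hu => hnn u ⟨by linarith [hu.1], hu.2⟩)
  linarith

/-- The key step: from failure of the clustering inequality at `u`, the mass beyond `v`
is controlled by `ρ u ^ m`. -/
private lemma lc_key {R : ℝ} (hR : 0 < R) {ρ : ℝ → ℝ} {m : ℝ} (hm : 1 < m)
    (hnn : ∀ x ∈ Set.Icc R (4*R), 0 ≤ ρ x) (hmono : AntitoneOn ρ (Set.Icc R (4*R)))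
    {a u v : ℝ} (ha : 0 < a) (hu : R ≤ u) (huv : u < v) (hv : v ≤ 2*R)
    (hcond : ρ u ^ (m-1) ≤ a * (v - u) / 2)
    (hfail : a * (∫ x in u..(4*R), (x - u) * ρ x) < ∫ x in u..(4*R), ρ x ^ m) :
    (∫ x in v..(4*R), ρ x) ≤ 2 * ρ u ^ m / a := by
  have hm0 : (0:ℝ) < m := by linarith
  set d := v - u with hd
  have hd0 : 0 < d := by simp only [hd]; linarith
  clear_value d
  have humem : u ∈ Set.Icc R (4*R) := ⟨hu, by linarith⟩
  have hvmem : v ∈ Set.Icc R (4*R) := ⟨by linarith, by linarith⟩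
  have h4mem : (4*R) ∈ Set.Icc R (4*R) := ⟨by linarith, le_refl _⟩
  have hρm_anti : AntitoneOn (fun x => ρ x ^ m) (Set.Icc R (4*R)) :=
    fun x hx y hy hxy => Real.rpow_le_rpow (hnn y hy) (hmono hx hy hxy) hm0.le
  have hiρuv : IntervalIntegrable ρ volume u v :=
    (hmono.mono (lc_sub hu (by linarith) (by linarith) (by linarith))).intervalIntegrable
  have hiρv4 : IntervalIntegrable ρ volume v (4*R) :=
    (hmono.mono (lc_sub (by linarith) (by linarith) (by linarith) (le_refl _))).intervalIntegrable
  have hiρu4 : IntervalIntegrable ρ volume u (4*R) :=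
    (hmono.mono (lc_sub hu (by linarith) (by linarith) (le_refl _))).intervalIntegrable
  have hiρmu4 : IntervalIntegrable (fun x => ρ x ^ m) volume u (4*R) :=
    (hρm_anti.mono (lc_sub hu (by linarith) (by linarith) (le_refl _))).intervalIntegrable
  have hiwuv : IntervalIntegrable (fun x => (x - u) * ρ x) volume u v :=
    hiρuv.continuousOn_mul (by fun_prop)
  have hiwv4 : IntervalIntegrable (fun x => (x - u) * ρ x) volume v (4*R) :=
    hiρv4.continuousOn_mul (by fun_prop)
  -- weight lower bound
  have hW1 : (∫ x in u..(4*R), (x - u) * ρ x)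
      = (∫ x in u..v, (x - u) * ρ x) + ∫ x in v..(4*R), (x - u) * ρ x :=
    (integral_add_adjacent_intervals hiwuv hiwv4).symm
  have hW2 : 0 ≤ ∫ x in u..v, (x - u) * ρ x :=
    intervalIntegral.integral_nonneg huv.le (fun x hx =>
      mul_nonneg (by linarith [hx.1]) (hnn x ⟨by linarith [hx.1], by linarith [hx.2]⟩))
  have hW3 : d * (∫ x in v..(4*R), ρ x) ≤ ∫ x in v..(4*R), (x - u) * ρ x := by
    have h := integral_mono_on (by linarith : v ≤ 4*R) (hiρv4.const_mul d) hiwv4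
      (fun x hx => by
        have hx1 : d ≤ x - u := by simp only [hd]; linarith [hx.1]
        exact mul_le_mul_of_nonneg_right hx1 (hnn x ⟨by linarith [hx.1], hx.2⟩))
    simpa [intervalIntegral.integral_const_mul] using h
  -- density upper bound
  have hL1 : (∫ x in u..(4*R), ρ x ^ m) ≤ ρ u ^ (m-1) * ∫ x in u..(4*R), ρ x := by
    have h := integral_mono_on (by linarith : u ≤ 4*R) hiρmu4 (hiρu4.const_mul (ρ u ^ (m-1)))
      (fun x hx => by
        have hx0 : 0 ≤ ρ x := hnn x ⟨by linarith [hx.1], hx.2⟩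
        have hxm : ρ x ^ m = ρ x ^ (m-1) * ρ x := by
          have h := Real.rpow_add' hx0 (ne_of_gt (by linarith : (0:ℝ) < m - 1 + 1))
          rw [show m - 1 + 1 = m from by ring, Real.rpow_one] at h
          exact h
        rw [hxm]
        exact mul_le_mul_of_nonneg_right
          (Real.rpow_le_rpow hx0 (hmono humem ⟨by linarith [hx.1], hx.2⟩ hx.1) (by linarith)) hx0)
    simpa [intervalIntegral.integral_const_mul] using h
  have hμsplit : (∫ x in u..(4*R), ρ x) = (∫ x in u..v, ρ x) + ∫ x in v..(4*R), ρ x :=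
    (integral_add_adjacent_intervals hiρuv hiρv4).symm
  have hμuv : (∫ x in u..v, ρ x) ≤ d * ρ u := by
    have h := integral_mono_on huv.le hiρuv (_root_.intervalIntegrable_const (c := ρ u))
      (fun x hx => hmono humem ⟨by linarith [hx.1], by linarith [hx.2]⟩ hx.1)
    rw [hd]
    simpa [smul_eq_mul, mul_comm] using h
  have hμv0 : 0 ≤ ∫ x in v..(4*R), ρ x :=
    intervalIntegral.integral_nonneg (by linarith)
      (fun x hx => hnn x ⟨by linarith [hx.1], hx.2⟩)
  set X := ∫ x in v..(4*R), ρ x with hX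
  clear_value X
  have hρu0 : 0 ≤ ρ u := hnn u humem
  have hρum : ρ u ^ m = ρ u ^ (m-1) * ρ u := by
    have h := Real.rpow_add' hρu0 (ne_of_gt (by linarith : (0:ℝ) < m - 1 + 1))
    rw [show m - 1 + 1 = m from by ring, Real.rpow_one] at h
    exact h
  have e1 : a * (d * X) ≤ a * ∫ x in u..(4*R), (x - u) * ρ x := by
    apply mul_le_mul_of_nonneg_left _ ha.le
    rw [hW1]; linarith
  have e2 : (∫ x in u..(4*R), ρ x ^ m) ≤ ρ u ^ (m-1) * (d * ρ u + X) := by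
    calc (∫ x in u..(4*R), ρ x ^ m) ≤ ρ u ^ (m-1) * ∫ x in u..(4*R), ρ x := hL1
      _ ≤ ρ u ^ (m-1) * (d * ρ u + X) := by
          apply mul_le_mul_of_nonneg_left _ (Real.rpow_nonneg hρu0 _)
          rw [hμsplit]; linarith
  have e3 : ρ u ^ (m-1) * X ≤ (a * d / 2) * X := mul_le_mul_of_nonneg_right hcond hμv0
  have e5 : a * (d * X) < ρ u ^ (m-1) * (d * ρ u + X) :=
    lt_of_le_of_lt e1 (lt_of_lt_of_le hfail e2)
  have e4 : a * d / 2 * X ≤ ρ u ^ m * d := by rw [hρum]; nlinarith [e5, e3]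
  rw [le_div_iff₀ ha]
  nlinarith [e4, hd0]

set_option maxHeartbeats 2000000 in
/-- Lemma of local clustering: for `m > 1` there is `C_m > 0` such that for every `R > 0`
and every nonincreasing nonnegative `ρ` on `[R, 4R]`, some `r ∈ [R, 2R]` satisfies
`∫_r^{4R} ρ(x)^m dx ≤ (C_m/R) ρ(R)^{m-1} ∫_r^{4R} (x-r) ρ(x) dx`. -/
theorem stmt_14 (m : ℝ) (hm : 1 < m) :
    ∃ C : ℝ, 0 < C ∧
      ∀ R : ℝ, 0 < R → ∀ ρ : ℝ → ℝ,
        (∀ x ∈ Set.Icc R (4 * R), 0 ≤ ρ x) →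
        AntitoneOn ρ (Set.Icc R (4 * R)) →
        ∃ r ∈ Set.Icc R (2 * R),
          (∫ x in r..(4 * R), ρ x ^ m)
            ≤ (C / R * ρ R ^ (m - 1)) * ∫ x in r..(4 * R), (x - r) * ρ x := by
  have hm1 : (0:ℝ) < m - 1 := by linarith
  have hm0 : (0:ℝ) < m := by linarith
  set q : ℝ := ((1:ℝ)/4) ^ (1/(m-1)) with hqdef
  have hq0 : 0 < q := Real.rpow_pos_of_pos (by norm_num) _
  have hq1 : q < 1 := Real.rpow_lt_one (by norm_num) (by norm_num) (by positivity)
  have hqm : q ^ (m-1) = 1/4 := by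
    have h : (1/(m-1)) * (m-1) = 1 := by field_simp
    rw [hqdef, ← Real.rpow_mul (by norm_num : (0:ℝ) ≤ 1/4), h, Real.rpow_one]
  refine ⟨8/q, by positivity, ?_⟩
  intro R hR ρ hnn hmono
  by_contra hcon
  push_neg at hcon
  have h2mem : 2*R ∈ Set.Icc R (2*R) := ⟨by linarith, le_refl _⟩
  rcases le_or_gt (ρ R) 0 with hP | hP
  · -- degenerate case : ρ vanishes identically
    have hRmemI : R ∈ Set.Icc R (4*R) := ⟨le_refl _, by linarith⟩
    have hzero : ∀ x ∈ Set.Icc R (4*R), ρ x = 0 := fun x hx =>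
      le_antisymm (le_trans (hmono hRmemI hx hx.1) hP) (hnn x hx)
    have hlast := hcon (2*R) h2mem
    have e1 : (∫ x in (2*R)..(4*R), ρ x ^ m) = 0 := by
      rw [intervalIntegral.integral_congr (g := fun _ => (0:ℝ)) (fun x hx => by
        rw [hzero x (lc_sub (by linarith) (by linarith) (by linarith) (le_refl (4*R)) hx)]
        exact Real.zero_rpow (by linarith))]
      simp
    have e2 : (∫ x in (2*R)..(4*R), (x - 2*R) * ρ x) = 0 := by
      rw [intervalIntegral.integral_congr (g := fun _ => (0:ℝ)) (fun x hx => by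
        rw [hzero x (lc_sub (by linarith) (by linarith) (by linarith) (le_refl (4*R)) hx),
          mul_zero])]
      simp
    rw [show (2:ℝ)*R = 2*R from rfl] at hlast
    rw [e1, e2, mul_zero] at hlast
    exact lt_irrefl 0 hlast
  · -- main case
    set a := 8/q/R * ρ R ^ (m-1) with hadef
    have ha : 0 < a := mul_pos (by positivity) (Real.rpow_pos_of_pos hP _)
    have hPne : ρ R ^ (m-1) ≠ 0 := (Real.rpow_pos_of_pos hP _).ne'
    have h2k1 : ∀ k:ℕ, (1:ℝ) ≤ 2^k := fun k => one_le_pow₀ (by norm_num)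
    have hqk : ∀ k : ℕ, ((q:ℝ) ^ k) ^ (m-1) = (1/4:ℝ)^k := by
      intro k
      rw [← Real.rpow_natCast q k, ← Real.rpow_mul hq0.le,
        mul_comm ((k:ℝ)) (m-1), Real.rpow_mul hq0.le, hqm, Real.rpow_natCast]
    have hqkm : ∀ k : ℕ, ((q:ℝ)^k) ^ m = (1/4:ℝ)^k * q^k := by
      intro k
      have h := Real.rpow_add' (pow_nonneg hq0.le k)
        (ne_of_gt (by linarith : (0:ℝ) < m - 1 + 1))
      rw [show m - 1 + 1 = m from by ring, Real.rpow_one] at h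
      rw [h, hqk]
    have hdk0 : ∀ k : ℕ, 0 < R/2^k := fun k => by positivity
    have hdkR : ∀ k : ℕ, R/2^k ≤ R := fun k => by
      rw [div_le_iff₀ (by positivity : (0:ℝ) < 2^k)]; nlinarith [h2k1 k]
    have hRrk : ∀ k : ℕ, R ≤ 2*R - R/2^k := fun k => by linarith [hdkR k]
    have hhalf : ∀ k : ℕ, (1/4:ℝ)^k * 2^k = (1/2:ℝ)^k := fun k => by
      rw [← mul_pow]; norm_num
    -- the main step: failure at `2R - R/2^k` controls the mass beyond the midpoint
    have hstep : ∀ k : ℕ, ρ (2*R - R/2^k) ≤ ρ R * q ^ k →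
        (∫ x in (2*R - 3/4*(R/2^k))..(4*R), ρ x)
          ≤ 2 * (ρ R ^ m * ((1/4:ℝ)^k * q^k)) / a := by
      intro k ih
      have h2k : (0:ℝ) < 2^k := by positivity
      have hRu : R ≤ 2*R - R/2^k := hRrk k
      have huv : 2*R - R/2^k < 2*R - 3/4*(R/2^k) := by nlinarith [hdk0 k]
      have hv2R : 2*R - 3/4*(R/2^k) ≤ 2*R := by nlinarith [hdk0 k]
      have humem : (2*R - R/2^k) ∈ Set.Icc R (4*R) := ⟨hRu, by linarith [hdk0 k]⟩
      have hcond : ρ (2*R - R/2^k) ^ (m-1)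
          ≤ a * ((2*R - 3/4*(R/2^k)) - (2*R - R/2^k)) / 2 := by
        have h1 : ρ (2*R - R/2^k) ^ (m-1) ≤ (ρ R * q^k)^(m-1) :=
          Real.rpow_le_rpow (hnn _ humem) ih hm1.le
        have h2 : (ρ R * q^k)^(m-1) = ρ R^(m-1) * (1/4:ℝ)^k := by
          rw [Real.mul_rpow hP.le (by positivity), hqk]
        have h3 : (2*R - 3/4*(R/2^k)) - (2*R - R/2^k) = R/2^k/4 := by ring
        have h4 : a * (R/2^k/4) / 2 = ρ R ^ (m-1) * (1/(q * 2^k)) := by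
          rw [hadef]; field_simp; ring
        rw [h3, h4]
        refine le_trans h1 ?_
        rw [h2]
        apply mul_le_mul_of_nonneg_left _ (Real.rpow_nonneg hP.le _)
        rw [le_div_iff₀ (by positivity)]
        calc (1/4:ℝ)^k * (q * 2^k) = q * ((1/4:ℝ)^k*2^k) := by ring
          _ = q * (1/2:ℝ)^k := by rw [hhalf k]
          _ ≤ 1 * 1 := mul_le_mul hq1.le (pow_le_one₀ (by norm_num) (by norm_num))
              (by positivity) (by norm_num)
          _ = 1 := by norm_num
      have hfail := hcon (2*R - R/2^k) ⟨hRu, by linarith [hdk0 k]⟩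
      have hkey := lc_key hR hm hnn hmono ha hRu huv hv2R hcond hfail
      refine le_trans hkey ?_
      gcongr
      have h5 : ρ (2*R - R/2^k) ^ m ≤ (ρ R * q^k)^m :=
        Real.rpow_le_rpow (hnn _ humem) ih hm0.le
      rw [Real.mul_rpow hP.le (by positivity), hqkm] at h5
      linarith [h5]
    have hnext : ∀ k : ℕ, ρ (2*R - R/2^k) ≤ ρ R * q ^ k →
        ρ (2*R - R/2^(k+1)) ≤ ρ R * q^(k+1) := by
      intro k ih
      have h2k : (0:ℝ) < 2^k := by positivity
      have hμ := hstep k ih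
      have hv : R ≤ 2*R - 3/4*(R/2^k) := by nlinarith [hdkR k, hdk0 k]
      have hvw : 2*R - 3/4*(R/2^k) ≤ 2*R - R/2^(k+1) := by
        rw [pow_succ]
        have : R/(2^k*2) = (R/2^k)/2 := by ring
        rw [this]; nlinarith [hdk0 k]
      have hw4 : 2*R - R/2^(k+1) ≤ 4*R := by nlinarith [hdk0 (k+1), hR]
      have htail := lc_tail hR hnn hmono hv hvw hw4
      have hwv : (2*R - R/2^(k+1)) - (2*R - 3/4*(R/2^k)) = R/2^k/4 := by
        rw [pow_succ]; ring
      have h6 : (R/2^k/4) * ρ (2*R - R/2^(k+1))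
          ≤ 2 * (ρ R ^ m * ((1/4:ℝ)^k * q^k)) / a := by
        calc (R/2^k/4) * ρ (2*R - R/2^(k+1))
            = ((2*R - R/2^(k+1)) - (2*R - 3/4*(R/2^k))) * ρ (2*R - R/2^(k+1)) := by rw [hwv]
          _ ≤ _ := le_trans htail hμ
      have hPm : ρ R ^ m = ρ R ^ (m-1) * ρ R := by
        have h := Real.rpow_add' hP.le (ne_of_gt (by linarith : (0:ℝ) < m - 1 + 1))
        rw [show m - 1 + 1 = m from by ring, Real.rpow_one] at h; exact h
      have hval : 2 * (ρ R ^ m * ((1/4:ℝ)^k * q^k)) / a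
          = (q*R/4) * ((ρ R * ((1/4:ℝ)^k * q^k))) := by
        rw [hadef, hPm]
        field_simp
        ring
      rw [hval] at h6
      have h7 : ρ (2*R - R/2^(k+1)) ≤ q * (ρ R * q^k) * (1/2:ℝ)^k := by
        have hc : (0:ℝ) < R/2^k/4 := by positivity
        rw [← mul_le_mul_iff_right₀ hc]
        refine le_trans h6 (le_of_eq ?_)
        rw [← hhalf k]
        field_simp
      have h8 : q * (ρ R * q^k) * (1/2:ℝ)^k ≤ q * (ρ R * q^k) * 1 :=
        mul_le_mul_of_nonneg_left (pow_le_one₀ (by norm_num) (by norm_num)) (by positivity)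
      calc ρ (2*R - R/2^(k+1)) ≤ q * (ρ R * q^k) * (1/2:ℝ)^k := h7
        _ ≤ q * (ρ R * q^k) * 1 := h8
        _ = ρ R * q^(k+1) := by rw [pow_succ]; ring
    have main : ∀ k : ℕ, ρ (2*R - R/2^k) ≤ ρ R * q ^ k := by
      intro k; induction k with
      | zero =>
          have h : 2*R - R/2^0 = R := by rw [pow_zero, div_one]; ring
          rw [h, pow_zero, mul_one]
      | succ k ih => exact hnext k ih
    have hμ2 : ∀ k : ℕ, (∫ x in (2*R)..(4*R), ρ x)
        ≤ 2 * (ρ R ^ m * ((1/4:ℝ)^k * q^k)) / a := by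
      intro k
      have hv : R ≤ 2*R - 3/4*(R/2^k) := by nlinarith [hdkR k, hdk0 k]
      have hv2 : 2*R - 3/4*(R/2^k) ≤ 2*R := by nlinarith [hdk0 k]
      have hi1 : IntervalIntegrable ρ volume (2*R - 3/4*(R/2^k)) (2*R) :=
        (hmono.mono (lc_sub hv (by linarith) (by linarith) (by linarith))).intervalIntegrable
      have hi2 : IntervalIntegrable ρ volume (2*R) (4*R) :=
        (hmono.mono (lc_sub (by linarith) (by linarith) (by linarith)
          (le_refl _))).intervalIntegrable
      have hsplit := (intervalIntegral.integral_add_adjacent_intervals hi1 hi2).symm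
      have hpos : 0 ≤ ∫ x in (2*R - 3/4*(R/2^k))..(2*R), ρ x :=
        intervalIntegral.integral_nonneg hv2
          (fun x hx => hnn x ⟨by linarith [hx.1], by linarith [hx.2]⟩)
      have hmono2 : (∫ x in (2*R)..(4*R), ρ x)
          ≤ ∫ x in (2*R - 3/4*(R/2^k))..(4*R), ρ x := by
        rw [hsplit]; linarith
      exact le_trans hmono2 (hstep k (main k))
    have hlim : Filter.Tendsto (fun k : ℕ => 2 * (ρ R ^ m * ((1/4:ℝ)^k * q^k)) / a)
        Filter.atTop (nhds 0) := by
      have heq : (fun k : ℕ => 2 * (ρ R ^ m * ((1/4:ℝ)^k * q^k)) / a)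
          = fun k : ℕ => (2 * ρ R ^ m / a) * ((q/4:ℝ))^k := by
        funext k
        rw [show (q/4:ℝ) = (1/4)*q from by ring, mul_pow]
        ring
      rw [heq]
      have h0 : Filter.Tendsto (fun k : ℕ => ((q/4:ℝ))^k) Filter.atTop (nhds 0) :=
        tendsto_pow_atTop_nhds_zero_of_lt_one (by positivity) (by nlinarith [hq1, hq0])
      have := h0.const_mul (2 * ρ R ^ m / a)
      simpa using this
    have hμ0 : (∫ x in (2*R)..(4*R), ρ x) = 0 := by
      have hle : (∫ x in (2*R)..(4*R), ρ x) ≤ 0 := ge_of_tendsto' hlim hμ2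
      have hge : 0 ≤ ∫ x in (2*R)..(4*R), ρ x :=
        intervalIntegral.integral_nonneg (by linarith)
          (fun x hx => hnn x ⟨by linarith [hx.1], hx.2⟩)
      linarith
    have hzero : ∀ w, 2*R < w → w ≤ 4*R → ρ w = 0 := by
      intro w h1 h2
      have h := lc_tail hR hnn hmono (by linarith : R ≤ 2*R) (by linarith) h2
      rw [hμ0] at h
      have h3 := hnn w ⟨by linarith, h2⟩
      nlinarith
    have hlast := hcon (2*R) h2mem
    have e1 : (∫ x in (2*R)..(4*R), ρ x ^ m) = 0 := by
      have hcg : ∀ᵐ x ∂(volume : MeasureTheory.Measure ℝ),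
          x ∈ Set.uIoc (2*R) (4*R) → ρ x ^ m = (0:ℝ) :=
        Filter.Eventually.of_forall (fun x hx => by
          rw [Set.uIoc_of_le (by linarith : 2*R ≤ 4*R)] at hx
          rw [hzero x hx.1 hx.2, Real.zero_rpow (by linarith)])
      rw [intervalIntegral.integral_congr_ae hcg]
      simp
    have e2 : (∫ x in (2*R)..(4*R), (x - 2*R) * ρ x) = 0 := by
      have hcg : ∀ᵐ x ∂(volume : MeasureTheory.Measure ℝ),
          x ∈ Set.uIoc (2*R) (4*R) → (x - 2*R) * ρ x = (0:ℝ) :=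
        Filter.Eventually.of_forall (fun x hx => by
          rw [Set.uIoc_of_le (by linarith : 2*R ≤ 4*R)] at hx
          rw [hzero x hx.1 hx.2, mul_zero])
      rw [intervalIntegral.integral_congr_ae hcg]
      simp
    rw [e1, e2, mul_zero] at hlast
    exact lt_irrefl 0 hlast
end

section
/- There exists a universal constant c > 0 such that for all real numbers 0 < r < R and all θ ∈ [−π, π], setting r̃ := 2R − r, the following two inequalities hold: (a) |r − R cos θ| ≤ r̃ − R cos θ; (b) √(r² − 2 r R cos θ + R²) ≥ c √(r̃² − 2 r̃ R cos θ + R²). -/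
/-- Reflection comparison: there is a universal `c > 0` such that for `0 < r < R`,
`θ ∈ [-π, π]`, and `r̃ = 2R - r`: (a) `|r - R cosθ| ≤ r̃ - R cosθ`;
(b) `√(r² - 2rR cosθ + R²) ≥ c √(r̃² - 2r̃R cosθ + R²)`. -/
theorem stmt_16 :
    ∃ c : ℝ, 0 < c ∧
      ∀ r R θ : ℝ, 0 < r → r < R → θ ∈ Set.Icc (-Real.pi) Real.pi →
        |r - R * Real.cos θ| ≤ (2 * R - r) - R * Real.cos θ
        ∧ c * Real.sqrt ((2 * R - r) ^ 2 - 2 * (2 * R - r) * R * Real.cos θ + R ^ 2)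
            ≤ Real.sqrt (r ^ 2 - 2 * r * R * Real.cos θ + R ^ 2) := by
  refine ⟨1/3, by norm_num, fun r R θ hr hrR _ => ?_⟩
  have hc1 : Real.cos θ ≤ 1 := Real.cos_le_one θ
  have hc2 : -1 ≤ Real.cos θ := Real.neg_one_le_cos θ
  constructor
  · rw [abs_le]
    constructor <;> nlinarith
  · set A := r ^ 2 - 2 * r * R * Real.cos θ + R ^ 2 with hA
    set B := (2 * R - r) ^ 2 - 2 * (2 * R - r) * R * Real.cos θ + R ^ 2 with hB
    have hAnn : 0 ≤ A := by
      nlinarith [sq_nonneg (r - R), mul_nonneg (mul_nonneg hr.le (hr.trans hrR).le)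
        (by linarith : (0:ℝ) ≤ 1 - Real.cos θ)]
    have hBA : B ≤ 9 * A := by
      nlinarith [mul_nonneg (by linarith : (0:ℝ) ≤ 1 + Real.cos θ) (sq_nonneg (r - R)),
        mul_nonneg (by linarith : (0:ℝ) ≤ 1 - Real.cos θ) (mul_nonneg hr.le (hr.trans hrR).le),
        mul_nonneg (by linarith : (0:ℝ) ≤ 1 - Real.cos θ) (sq_nonneg r)]
    have h := Real.sqrt_le_sqrt hBA
    rw [show (9:ℝ) * A = 3^2 * A by ring, Real.sqrt_mul (by positivity),
      Real.sqrt_sq (by norm_num)] at h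
    linarith
end

section
/- Let W : (0, ∞) → ℝ be nondecreasing, and let C₀ > 0 be such that W(ρ) ≥ W(1) + C₀ ln ρ for all ρ ∈ (0, 1]. Let M > 0 and let ρ : ℝ² → [0, ∞) be measurable with ∫_{ℝ²} ρ(x) dx = 1 and ρ(x) ≤ M for almost every x. Then the interaction energy satisfies ∫_{ℝ²} ∫_{ℝ²} W(|x − y|) ρ(y) ρ(x) dy dx ≥ 2 min{W(1), 0} − (π/2) C₀ M. In particular, the interaction energy is bounded below by a constant depending only on W(1), C₀ and M. -/
open MeasureTheory

open Metric Set


lemma stmt18_radial_int : ∫ y in Set.Ioi (0:ℝ), y ^ 1 • max (-Real.log y) 0 = 1/4 := by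
  have hsplit : Set.Ioi (0:ℝ) = Set.Ioc (0:ℝ) 1 ∪ Set.Ioi 1 := (Set.Ioc_union_Ioi_eq_Ioi zero_le_one).symm
  have hcong1 : ∀ y ∈ Set.Ioc (0:ℝ) 1, y ^ 1 • max (-Real.log y) 0 = -(y * Real.log y) := by
    intro y hy
    have : Real.log y ≤ 0 := Real.log_nonpos hy.1.le hy.2
    simp [max_eq_left (by linarith : (0:ℝ) ≤ -Real.log y)]
  have hcong2 : ∀ y ∈ Set.Ioi (1:ℝ), y ^ 1 • max (-Real.log y) 0 = 0 := by
    intro y hy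
    have : 0 ≤ Real.log y := Real.log_nonneg (le_of_lt hy)
    simp [max_eq_right (by linarith : -Real.log y ≤ (0:ℝ))]
  have hint1 : IntegrableOn (fun y : ℝ => y ^ 1 • max (-Real.log y) 0) (Set.Ioc (0:ℝ) 1) := by
    rw [integrableOn_congr_fun hcong1 measurableSet_Ioc]
    exact (Real.continuous_mul_log.neg).integrableOn_Ioc
  have hint2 : IntegrableOn (fun y : ℝ => y ^ 1 • max (-Real.log y) 0) (Set.Ioi (1:ℝ)) := by
    rw [integrableOn_congr_fun hcong2 measurableSet_Ioi]
    exact integrableOn_zero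
  rw [hsplit, setIntegral_union (by simp [Set.disjoint_left]) measurableSet_Ioi hint1 hint2,
    setIntegral_congr_fun measurableSet_Ioc hcong1, setIntegral_congr_fun measurableSet_Ioi hcong2,
    integral_zero, add_zero, ← intervalIntegral.integral_of_le zero_le_one]
  have key : ∀ y ∈ Set.uIcc (0:ℝ) 1,
      HasDerivAt (fun t : ℝ => t^2/4 - t^2/2 * Real.log t) (-(y * Real.log y)) y := by
    intro y hy
    rw [Set.uIcc_of_le zero_le_one] at hy
    rcases eq_or_lt_of_le hy.1 with h0 | h0
    · subst h0
      rw [hasDerivAt_iff_tendsto_slope]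
      have hcont : Filter.Tendsto (fun t : ℝ => t/4 - (t * Real.log t)/2)
          (nhds 0) (nhds (-(0 * Real.log 0))) := by
        have h1 : Continuous (fun t : ℝ => t/4 - (t * Real.log t)/2) :=
          (continuous_id.div_const 4).sub (Real.continuous_mul_log.div_const 2)
        simpa using h1.tendsto 0
      refine (hcont.mono_left nhdsWithin_le_nhds).congr' ?_
      filter_upwards [self_mem_nhdsWithin] with t (ht : t ≠ 0)
      simp only [slope_def_field]
      field_simp
      ring
    · have h1 : HasDerivAt (fun t : ℝ => t^2/4) (2*y/4) y := by
        have := (hasDerivAt_pow 2 y).div_const 4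
        norm_num at this ⊢
        convert this using 1
      have h2 : HasDerivAt (fun t : ℝ => t^2/2 * Real.log t)
          (y * Real.log y + y/2) y := by
        have := ((hasDerivAt_pow 2 y).div_const 2).mul (Real.hasDerivAt_log h0.ne')
        norm_num at this
        refine this.congr_deriv ?_
        field_simp
      have := h1.sub h2
      refine this.congr_deriv ?_
      ring
  have hint : IntervalIntegrable (fun y => -(y * Real.log y)) volume 0 1 :=
    (Real.continuous_mul_log.neg).intervalIntegrable 0 1
  have h := intervalIntegral.integral_eq_sub_of_hasDerivAt key hint
  rw [h]
  norm_num

lemma stmt18_phi_total : ∫ z : EuclideanSpace ℝ (Fin 2), max (-Real.log ‖z‖) 0 = Real.pi / 2 := by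
  have h := MeasureTheory.integral_fun_norm_addHaar (volume : Measure (EuclideanSpace ℝ (Fin 2)))
    (fun y => max (-Real.log y) 0)
  rw [h]
  have hdim : Module.finrank ℝ (EuclideanSpace ℝ (Fin 2)) = 2 := finrank_euclideanSpace_fin
  rw [hdim]
  have hball : (volume (ball (0 : EuclideanSpace ℝ (Fin 2)) 1)).toReal = Real.pi := by
    rw [EuclideanSpace.volume_ball]
    norm_num [Real.Gamma_two, Real.sq_sqrt Real.pi_pos.le]
    exact Real.pi_pos.le
  rw [measureReal_def, hball, stmt18_radial_int]
  norm_num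
  ring


lemma stmt18_phi_meas : Measurable fun z : EuclideanSpace ℝ (Fin 2) => max (-Real.log ‖z‖) 0 :=
  ((Real.measurable_log.comp measurable_norm).neg.max measurable_const)

lemma stmt18_phi_integrable : Integrable fun z : EuclideanSpace ℝ (Fin 2) => max (-Real.log ‖z‖) 0 := by
  set φ := fun z : EuclideanSpace ℝ (Fin 2) => max (-Real.log ‖z‖) 0 with hφ
  have hnn : ∀ z, 0 ≤ φ z := fun z => le_max_right _ _
  refine ⟨stmt18_phi_meas.aestronglyMeasurable, ?_⟩
  rw [hasFiniteIntegral_iff_norm]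
  have heq : ∀ z, ENNReal.ofReal ‖φ z‖ = ENNReal.ofReal (φ z) := by
    intro z; rw [Real.norm_of_nonneg (hnn z)]
  simp_rw [heq]
  rw [lintegral_eq_lintegral_meas_le volume (Filter.Eventually.of_forall hnn)
    stmt18_phi_meas.aemeasurable]
  have hbound : ∀ t ∈ Set.Ioi (0:ℝ),
      volume {a : EuclideanSpace ℝ (Fin 2) | t ≤ φ a} ≤
        ENNReal.ofReal (Real.pi * Real.exp (-2 * t)) := by
    intro t ht
    have hsub : {a : EuclideanSpace ℝ (Fin 2) | t ≤ φ a} ⊆ closedBall 0 (Real.exp (-t)) := by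
      intro a ha
      simp only [Set.mem_setOf_eq, hφ] at ha
      have h1 : t ≤ -Real.log ‖a‖ := by
        rcases le_max_iff.mp ha with h | h
        · exact h
        · linarith [ht.out]
      rw [mem_closedBall_zero_iff]
      have := Real.exp_le_exp.mpr (by linarith : Real.log ‖a‖ ≤ -t)
      exact le_trans (Real.le_exp_log ‖a‖) this
    calc volume {a : EuclideanSpace ℝ (Fin 2) | t ≤ φ a}
        ≤ volume (closedBall 0 (Real.exp (-t))) := measure_mono hsub
      _ = ENNReal.ofReal (Real.exp (-t)) ^ 2 *
            ENNReal.ofReal (Real.sqrt Real.pi ^ 2 / Real.Gamma (2/2+1)) := by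
          rw [EuclideanSpace.volume_closedBall]; norm_num
      _ = ENNReal.ofReal (Real.pi * Real.exp (-2*t)) := by
          rw [← ENNReal.ofReal_pow (Real.exp_pos _).le, ← ENNReal.ofReal_mul (by positivity)]
          congr 1
          rw [← Real.exp_nat_mul]
          norm_num [Real.Gamma_two, Real.sq_sqrt Real.pi_pos.le]
          ring
  calc (∫⁻ t in Set.Ioi (0:ℝ), volume {a : EuclideanSpace ℝ (Fin 2) | t ≤ φ a})
      ≤ ∫⁻ t in Set.Ioi (0:ℝ), ENNReal.ofReal (Real.pi * Real.exp (-2 * t)) :=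
        setLIntegral_mono' measurableSet_Ioi hbound
    _ < ⊤ := by
        refine IntegrableOn.setLIntegral_lt_top ?_
        exact (exp_neg_integrableOn_Ioi 0 (by norm_num : (0:ℝ) < 2)).const_mul Real.pi

/-- Lower bound for the (twice the) interaction energy: if `W` is nondecreasing on `(0,∞)`
with `W(ρ) ≥ W(1) + C₀ ln ρ` on `(0,1]`, and `ρ` is a probability density on `ℝ²` bounded
by `M`, then `∬ W(|x-y|) ρ(y) ρ(x) dy dx ≥ 2 min{W(1), 0} - (π/2) C₀ M`. -/
theorem stmt_18 (W : ℝ → ℝ) (hmono : MonotoneOn W (Set.Ioi (0 : ℝ)))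
    (C₀ : ℝ) (hC₀ : 0 < C₀)
    (hlog : ∀ ρ : ℝ, 0 < ρ → ρ ≤ 1 → W 1 + C₀ * Real.log ρ ≤ W ρ)
    (M : ℝ) (hM : 0 < M)
    (ρ : EuclideanSpace ℝ (Fin 2) → ℝ) (hmeas : Measurable ρ)
    (hnn : ∀ x, 0 ≤ ρ x) (hmass : ∫ x, ρ x = 1)
    (hbdd : ∀ᵐ x, ρ x ≤ M) :
    2 * min (W 1) 0 - Real.pi / 2 * C₀ * M ≤
      ∫ x : EuclideanSpace ℝ (Fin 2),
        (∫ y : EuclideanSpace ℝ (Fin 2), W ‖x - y‖ * ρ y) * ρ x := by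
  set φ : EuclideanSpace ℝ (Fin 2) → ℝ := fun z => max (-Real.log ‖z‖) 0 with hφdef
  have hφnn : ∀ z, 0 ≤ φ z := fun z => le_max_right _ _
  have hπ := Real.pi_pos
  -- ρ is integrable
  have hρint : Integrable ρ := by
    by_contra h
    rw [integral_undef h] at hmass
    norm_num at hmass
  -- the constant
  set c : ℝ := min (W 1) 0 - C₀ * (M * (Real.pi / 2)) with hc
  have hmin0 : min (W 1) 0 ≤ 0 := min_le_right _ _
  have hcneg : c < 0 := by
    have : 0 < C₀ * (M * (Real.pi / 2)) := by positivity
    simp only [hc]; linarith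
  -- integrability of translated φ
  have hφtr : ∀ x : EuclideanSpace ℝ (Fin 2), Integrable fun y => φ (x - y) :=
    fun x => (integrable_comp_sub_left φ x).mpr stmt18_phi_integrable
  have hφρ_int : ∀ x : EuclideanSpace ℝ (Fin 2), Integrable fun y => φ (x - y) * ρ y := by
    intro x
    have := (hφtr x).bdd_mul (c := M) hmeas.aestronglyMeasurable ?_
    · exact this.congr (Filter.Eventually.of_forall fun y => mul_comm _ _)
    · filter_upwards [hbdd] with y hy
      rw [Real.norm_of_nonneg (hnn y)]; exact hy
  have hφρ_nonneg : ∀ x : EuclideanSpace ℝ (Fin 2), 0 ≤ ∫ y, φ (x - y) * ρ y := by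
    intro x
    exact integral_nonneg fun y => mul_nonneg (hφnn _) (hnn y)
  -- bound on ∫ φ(x-y) ρ y
  have hφρ_bdd : ∀ x : EuclideanSpace ℝ (Fin 2), ∫ y, φ (x - y) * ρ y ≤ M * (Real.pi / 2) := by
    intro x
    have h1 : ∫ y, φ (x - y) * ρ y ≤ ∫ y, M * φ (x - y) := by
      refine integral_mono_ae (hφρ_int x) ((hφtr x).const_mul M) ?_
      filter_upwards [hbdd] with y hy
      calc φ (x - y) * ρ y ≤ φ (x - y) * M :=
            mul_le_mul_of_nonneg_left hy (hφnn _)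
        _ = M * φ (x - y) := mul_comm _ _
    have h2 : ∫ y, M * φ (x - y) = M * (Real.pi / 2) := by
      rw [integral_const_mul, integral_sub_left_eq_self φ volume x, stmt18_phi_total]
    linarith
  -- pointwise lower bound on W
  have hlb : ∀ r : ℝ, 0 < r → min (W 1) 0 - C₀ * max (-Real.log r) 0 ≤ W r := by
    intro r hr
    rcases le_or_gt r 1 with h1 | h1
    · have hlogr : Real.log r ≤ 0 := Real.log_nonpos hr.le h1
      have hmax : max (-Real.log r) 0 = -Real.log r := max_eq_left (by linarith)
      have := hlog r hr h1
      rw [hmax]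
      have := min_le_left (W 1) 0
      nlinarith
    · have hW : W 1 ≤ W r := hmono (mem_Ioi.mpr one_pos) (mem_Ioi.mpr hr) h1.le
      have hlogr : 0 ≤ Real.log r := Real.log_nonneg h1.le
      have hmax : max (-Real.log r) 0 = 0 := max_eq_right (by linarith)
      rw [hmax]
      have := min_le_left (W 1) 0
      linarith
  -- lower-bound function ℓ_x and its integral
  have hℓint : ∀ x : EuclideanSpace ℝ (Fin 2), Integrable fun y => (min (W 1) 0 - C₀ * φ (x - y)) * ρ y := by
    intro x
    have h := (hρint.const_mul (min (W 1) 0)).sub ((hφρ_int x).const_mul C₀)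
    exact h.congr (Filter.Eventually.of_forall fun y => by
      simp only [Pi.sub_apply]; ring)
  have hℓval : ∀ x : EuclideanSpace ℝ (Fin 2), c ≤ ∫ y, (min (W 1) 0 - C₀ * φ (x - y)) * ρ y := by
    intro x
    have heq : ∫ y, (min (W 1) 0 - C₀ * φ (x - y)) * ρ y
        = min (W 1) 0 * (∫ y, ρ y) - C₀ * ∫ y, φ (x - y) * ρ y := by
      rw [show (fun y => (min (W 1) 0 - C₀ * φ (x - y)) * ρ y)
            = fun y => (min (W 1) 0) * ρ y - C₀ * (φ (x - y) * ρ y) from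
          funext fun y => by ring]
      rw [integral_sub (hρint.const_mul _) ((hφρ_int x).const_mul C₀),
        integral_const_mul, integral_const_mul]
    rw [heq, hmass, mul_one]
    have := mul_le_mul_of_nonneg_left (hφρ_bdd x) hC₀.le
    simp only [hc]
    linarith
  -- inner integral lower bound
  have hinner : ∀ x : EuclideanSpace ℝ (Fin 2), c ≤ ∫ y, W ‖x - y‖ * ρ y := by
    intro x
    by_cases hfi : Integrable fun y => W ‖x - y‖ * ρ y
    · refine le_trans (hℓval x) (integral_mono_ae (hℓint x) hfi ?_)
      have hx : ∀ᵐ y : EuclideanSpace ℝ (Fin 2), y ≠ x := by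
        refine (ae_iff.mpr ?_)
        have : {y : EuclideanSpace ℝ (Fin 2) | ¬ y ≠ x} = {x} := by ext y; simp
        rw [this]
        exact measure_singleton x
      filter_upwards [hx] with y hy
      have hr : 0 < ‖x - y‖ := by
        rw [norm_sub_pos_iff]
        exact fun h => hy h.symm
      exact mul_le_mul_of_nonneg_right (hlb _ hr) (hnn y)
    · rw [integral_undef hfi]
      exact hcneg.le
  -- outer integral
  by_cases hI : Integrable fun x : EuclideanSpace ℝ (Fin 2) => (∫ y, W ‖x - y‖ * ρ y) * ρ x
  · have h1 : ∫ x : EuclideanSpace ℝ (Fin 2), c * ρ x ≤ ∫ x : EuclideanSpace ℝ (Fin 2), (∫ y, W ‖x - y‖ * ρ y) * ρ x := by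
      refine integral_mono (hρint.const_mul c) hI ?_
      intro x
      exact mul_le_mul_of_nonneg_right (hinner x) (hnn x)
    rw [integral_const_mul, hmass, mul_one] at h1
    have hring : Real.pi / 2 * C₀ * M = C₀ * (M * (Real.pi / 2)) := by ring
    have : 2 * min (W 1) 0 - Real.pi / 2 * C₀ * M ≤ c := by
      simp only [hc]; linarith
    exact le_trans this h1
  · rw [integral_undef hI]
    have : 0 < Real.pi / 2 * C₀ * M := by positivity
    linarith
end
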